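/- arXiv:1112.4970 — 5 statements merged into one kernel-verified Lean document; each statement's English description precedes it below -/
import Mathlib

section
/- Exchange Lemma for k = 3: let n, p_1, p_2, p_3 be positive integers and let {a,b,c} = {1,2,3}. Then N_{{a,b}×∅} = N_{{a}×{b}} − N_{{a,c}×{b}} + N_{{a,b}×{a,c}}. -/
open Finset

/-- A `(p 0, …, p (k-1))`-colored factorization of the cycle `(1,2,…,n)` (encoded as
`finRotate n` on `Fin n`): permutations `π t` whose product (in order) is the long cycle,
together with surjective colorings `φ t : Fin n → Fin (p t)` constant on cycles of `π t`. -/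
def IsColoredFact {n k : ℕ} (p : Fin k → ℕ)
    (x : (Fin k → Equiv.Perm (Fin n)) × ((t : Fin k) → Fin n → Fin (p t))) : Prop :=
  (List.ofFn x.1).prod = finRotate n ∧
  (∀ t, Function.Surjective (x.2 t)) ∧
  ∀ t a b, (x.1 t).SameCycle a b → x.2 t a = x.2 t b

/-- `C^n_{p_1,…,p_k}`: the number of colored factorizations. -/
noncomputable def Ccard (n k : ℕ) (p : Fin k → ℕ) : ℕ :=
  Nat.card {x : (Fin k → Equiv.Perm (Fin n)) × ((t : Fin k) → Fin n → Fin (p t)) //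
    IsColoredFact p x}

/-- Membership in `M^n_{p_1,…,p_k}`: a tuple of strict subsets of `Fin k` such that each
`t` lies in exactly `p t` of the subsets. -/
def InM {k n : ℕ} (p : Fin k → ℕ) (R : Fin n → Finset (Fin k)) : Prop :=
  (∀ i, R i ≠ Finset.univ) ∧ ∀ t, (Finset.univ.filter fun i => t ∈ R i).card = p t

/-- `M^m_{p_1,…,p_k}`: the number of such tuples. -/
noncomputable def Mcard (k m : ℕ) (p : Fin k → ℕ) : ℕ :=
  Nat.card {R : Fin m → Finset (Fin k) // InM p R}

open Fin.NatCast in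
/-- The map `α(t,R)` (vertices of `[k]` are `0`-indexed as `Fin k`): `α(t,R) = t-1` if
`t ∈ R`, and `α(t,R) = t+r` where `r ≥ 0` is largest with `t+1,…,t+r ∈ R` otherwise. -/
def alpha {k : ℕ} [NeZero k] (t : Fin k) (R : Finset (Fin k)) : Fin k :=
  if t ∈ R then t - 1
  else t + ((Nat.findGreatest (fun r => ∀ s ∈ Finset.Icc 1 r, t + (s : Fin k) ∈ R) (k - 1) : ℕ) : Fin k)

/-- The edges `e_t = {t, α(t, R_{i_t})}`, `t` ranging over the first `k-1` vertices. -/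
def treeEdges {k n : ℕ} [NeZero k] (idx : Fin (k - 1) → Fin n) (R : Fin n → Finset (Fin k))
    (t : Fin (k - 1)) : Sym2 (Fin k) :=
  s(Fin.castLE (Nat.sub_le k 1) t, alpha (Fin.castLE (Nat.sub_le k 1) t) (R (idx t)))

/-- The graph `α((i_1,…,i_{k-1}), (R_1,…,R_n))` is a tree: its `k-1` edges are loopless,
pairwise distinct (as unordered pairs) and the resulting graph on `Fin k` is connected. -/
def IsTreeGraph {k n : ℕ} [NeZero k] (idx : Fin (k - 1) → Fin n)
    (R : Fin n → Finset (Fin k)) : Prop :=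
  (∀ t : Fin (k - 1), Fin.castLE (Nat.sub_le k 1) t ≠ alpha (Fin.castLE (Nat.sub_le k 1) t) (R (idx t))) ∧
  Function.Injective (treeEdges idx R) ∧
  (SimpleGraph.fromEdgeSet (Set.range (treeEdges idx R))).Connected

/-- The number of cycles (including fixed points) of a permutation. -/
def cycleCount {n : ℕ} (π : Equiv.Perm (Fin n)) : ℕ :=
  π.cycleType.card + (Finset.univ.filter fun a => π a = a).card

/-- Colored factorizations with prescribed color-compositions `γ`. -/
noncomputable def cColoredCard (n k : ℕ) (p : Fin k → ℕ) (γ : (t : Fin k) → Fin (p t) → ℕ) : ℕ :=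
  Nat.card {x : (Fin k → Equiv.Perm (Fin n)) × ((t : Fin k) → Fin n → Fin (p t)) //
    IsColoredFact p x ∧ ∀ t i, (Finset.univ.filter fun a => x.2 t a = i).card = γ t i}

/-- `N_{A×B}`: number of triples `(i,j,R)` with `R ∈ M^n_{p_1,p_2,p_3}`, `A ⊆ R i`, `B ⊆ R j`. -/
noncomputable def Ncard (n : ℕ) (p : Fin 3 → ℕ) (A B : Finset (Fin 3)) : ℕ :=
  Nat.card {x : Fin n × Fin n × (Fin n → Finset (Fin 3)) //
    InM p x.2.2 ∧ A ⊆ x.2.2 x.1 ∧ B ⊆ x.2.2 x.2.1}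

def mv {n : ℕ} (b : Fin 3) (i j : Fin n) (R : Fin n → Finset (Fin 3)) :
    Fin n → Finset (Fin 3) :=
  fun x => if x = i then insert b (R i) else if x = j then (R j).erase b else R x

lemma mv_mv {n : ℕ} {b : Fin 3} {i j : Fin n} {R : Fin n → Finset (Fin 3)}
    (hij : i ≠ j) (hbj : b ∈ R j) (hbi : b ∉ R i) :
    mv b j i (mv b i j R) = R := by
  funext x
  simp only [mv]
  rcases eq_or_ne x j with rfl | hxj
  · simp [hij.symm, Finset.insert_erase hbj]
  · rcases eq_or_ne x i with rfl | hxi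
    · simp [hij, hxj, Finset.erase_insert hbi]
    · simp [hxi, hxj]

lemma mv_InM {n : ℕ} {p : Fin 3 → ℕ} {b : Fin 3} {i j : Fin n}
    {R : Fin n → Finset (Fin 3)} (hR : InM p R)
    (hij : i ≠ j) (hbj : b ∈ R j) (hbi : b ∉ R i)
    (hins : insert b (R i) ≠ Finset.univ) :
    InM p (mv b i j R) := by
  constructor
  · intro x
    simp only [mv]
    split_ifs with h1 h2
    · exact hins
    · intro h
      exact (Finset.notMem_erase b (R j)) (h ▸ Finset.mem_univ b)
    · exact hR.1 x
  · intro t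
    rcases eq_or_ne t b with rfl | htb
    · have hset : (Finset.univ.filter fun x => t ∈ mv t i j R x)
          = insert i ((Finset.univ.filter fun x => t ∈ R x).erase j) := by
        ext x
        simp only [Finset.mem_filter, Finset.mem_univ, true_and, Finset.mem_insert,
          Finset.mem_erase]
        rcases eq_or_ne x i with rfl | hxi
        · simp [mv, Finset.mem_insert]
        · rcases eq_or_ne x j with rfl | hxj
          · simp [mv, Finset.mem_erase, hxi]
          · simp [mv, hxi, hxj]
      rw [hset]
      have hjmem : j ∈ (Finset.univ.filter fun x => t ∈ R x) := by
        simp [hbj]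
      have himem : i ∉ (Finset.univ.filter fun x => t ∈ R x).erase j := by
        simp [hbi]
      rw [Finset.card_insert_of_notMem himem, Finset.card_erase_of_mem hjmem]
      have hpos : 0 < (Finset.univ.filter fun x => t ∈ R x).card :=
        Finset.card_pos.2 ⟨j, hjmem⟩
      have := hR.2 t
      omega
    · have : ∀ x, (t ∈ mv b i j R x) ↔ t ∈ R x := by
        intro x
        simp only [mv]
        split_ifs with h1 h2
        · subst h1; simp [htb]
        · subst h2; simp [htb]
        · rfl
      rw [Finset.filter_congr fun x _ => this x]
      exact hR.2 t

lemma triple_ne {x y z : Fin 3} (h : ({x, y, z} : Finset (Fin 3)) = Finset.univ) :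
    x ≠ y := by
  rintro rfl
  have h3 : (Finset.univ : Finset (Fin 3)).card = 3 := by simp
  rw [← h] at h3
  have h1 : ({x, x, z} : Finset (Fin 3)) = insert x {z} := by
    simp
  rw [h1] at h3
  have h2 := Finset.card_insert_le x ({z} : Finset (Fin 3))
  simp at h2
  omega

open Classical in
noncomputable def cnt {n : ℕ} (P : Fin n × Fin n × (Fin n → Finset (Fin 3)) → Prop) : ℕ :=
  (Finset.univ.filter P).card

lemma cnt_card {n : ℕ} (P : Fin n × Fin n × (Fin n → Finset (Fin 3)) → Prop) :
    Nat.card {x // P x} = cnt P := by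
  classical
  rw [Nat.card_eq_fintype_card, Fintype.card_subtype, cnt]

lemma cnt_congr {n : ℕ} {P Q : Fin n × Fin n × (Fin n → Finset (Fin 3)) → Prop}
    (h : ∀ x, P x ↔ Q x) : cnt P = cnt Q := by
  unfold cnt
  congr 1
  ext x
  simp only [Finset.mem_filter]
  exact and_congr_right fun _ => h x

lemma cnt_split {n : ℕ} (P Q : Fin n × Fin n × (Fin n → Finset (Fin 3)) → Prop) :
    cnt P = cnt (fun x => P x ∧ Q x) + cnt (fun x => P x ∧ ¬ Q x) := by
  classical
  unfold cnt
  rw [← Finset.card_filter_add_card_filter_not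
    (s := Finset.univ.filter P) (p := Q)]
  congr 1 <;>
  · congr 1
    ext x
    simp only [Finset.mem_filter, Finset.mem_univ, true_and]
    try tauto

theorem exchange_lemma_k3 (n : ℕ) (hn : 0 < n) (p : Fin 3 → ℕ) (hp : ∀ t, 0 < p t)
    (a b c : Fin 3) (habc : ({a, b, c} : Finset (Fin 3)) = Finset.univ) :
    (Ncard n p {a, b} ∅ : ℤ) =
      Ncard n p {a} {b} - Ncard n p {a, c} {b} + Ncard n p {a, b} {a, c} := by
  classical
  have hab : a ≠ b := triple_ne habc
  have hcb : c ≠ b := by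
    apply triple_ne (x := c) (y := b) (z := a)
    rw [← habc]; ext x; simp; tauto
  have huniv : ∀ S : Finset (Fin 3), a ∈ S → b ∈ S → c ∈ S → S = Finset.univ := by
    intro S ha hb hc
    apply Finset.Subset.antisymm (Finset.subset_univ _)
    rw [← habc]
    intro x hx
    simp only [Finset.mem_insert, Finset.mem_singleton] at hx
    rcases hx with rfl | rfl | rfl <;> assumption
  -- the four counts as `cnt`s
  have e1 : Ncard n p {a, b} ∅ = cnt (fun x : Fin n × Fin n × (Fin n → Finset (Fin 3)) =>
      InM p x.2.2 ∧ a ∈ x.2.2 x.1 ∧ b ∈ x.2.2 x.1) := by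
    rw [Ncard, cnt_card]
    apply cnt_congr
    intro x
    simp [Finset.insert_subset_iff]
  have e2 : Ncard n p {a, c} {b} = cnt (fun x : Fin n × Fin n × (Fin n → Finset (Fin 3)) =>
      InM p x.2.2 ∧ (a ∈ x.2.2 x.1 ∧ c ∈ x.2.2 x.1) ∧ b ∈ x.2.2 x.2.1) := by
    rw [Ncard, cnt_card]
    apply cnt_congr
    intro x
    simp [Finset.insert_subset_iff]
  have e3 : Ncard n p {a} {b} = cnt (fun x : Fin n × Fin n × (Fin n → Finset (Fin 3)) =>
      InM p x.2.2 ∧ a ∈ x.2.2 x.1 ∧ b ∈ x.2.2 x.2.1) := by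
    rw [Ncard, cnt_card]
    apply cnt_congr
    intro x
    simp
  have e4 : Ncard n p {a, b} {a, c} = cnt (fun x : Fin n × Fin n × (Fin n → Finset (Fin 3)) =>
      InM p x.2.2 ∧ (a ∈ x.2.2 x.1 ∧ b ∈ x.2.2 x.1) ∧ (a ∈ x.2.2 x.2.1 ∧ c ∈ x.2.2 x.2.1)) := by
    rw [Ncard, cnt_card]
    apply cnt_congr
    intro x
    simp [Finset.insert_subset_iff]
  -- split N_{a×b} by c ∈ R i
  have hS3 := cnt_split
    (fun x : Fin n × Fin n × (Fin n → Finset (Fin 3)) =>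
      InM p x.2.2 ∧ a ∈ x.2.2 x.1 ∧ b ∈ x.2.2 x.2.1)
    (fun x => c ∈ x.2.2 x.1)
  -- split the remainder by b ∈ R i
  have hA := cnt_split
    (fun x : Fin n × Fin n × (Fin n → Finset (Fin 3)) =>
      (InM p x.2.2 ∧ a ∈ x.2.2 x.1 ∧ b ∈ x.2.2 x.2.1) ∧ ¬ c ∈ x.2.2 x.1)
    (fun x => b ∈ x.2.2 x.1)
  -- split N_{ab×∅} by b ∈ R j
  have hS1 := cnt_split
    (fun x : Fin n × Fin n × (Fin n → Finset (Fin 3)) =>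
      InM p x.2.2 ∧ a ∈ x.2.2 x.1 ∧ b ∈ x.2.2 x.1)
    (fun x => b ∈ x.2.2 x.2.1)
  -- then split the (b ∉ R j) part by a,c ∈ R j
  have hS1' := cnt_split
    (fun x : Fin n × Fin n × (Fin n → Finset (Fin 3)) =>
      (InM p x.2.2 ∧ a ∈ x.2.2 x.1 ∧ b ∈ x.2.2 x.1) ∧ ¬ b ∈ x.2.2 x.2.1)
    (fun x => a ∈ x.2.2 x.2.1 ∧ c ∈ x.2.2 x.2.1)
  -- identification 0: the (c ∈ R i) part of N_{a×b} is N_{ac×b}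
  have hid0 : cnt (fun x : Fin n × Fin n × (Fin n → Finset (Fin 3)) =>
        (InM p x.2.2 ∧ a ∈ x.2.2 x.1 ∧ b ∈ x.2.2 x.2.1) ∧ c ∈ x.2.2 x.1)
      = cnt (fun x : Fin n × Fin n × (Fin n → Finset (Fin 3)) =>
        InM p x.2.2 ∧ (a ∈ x.2.2 x.1 ∧ c ∈ x.2.2 x.1) ∧ b ∈ x.2.2 x.2.1) := by
    apply cnt_congr
    intro x
    tauto
  -- identification 1: the (c ∉ R i ∧ b ∈ R i) part equals the (b ∈ R j) part of S1
  have hid1 : cnt (fun x : Fin n × Fin n × (Fin n → Finset (Fin 3)) =>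
        ((InM p x.2.2 ∧ a ∈ x.2.2 x.1 ∧ b ∈ x.2.2 x.2.1) ∧ ¬ c ∈ x.2.2 x.1) ∧ b ∈ x.2.2 x.1)
      = cnt (fun x : Fin n × Fin n × (Fin n → Finset (Fin 3)) =>
        (InM p x.2.2 ∧ a ∈ x.2.2 x.1 ∧ b ∈ x.2.2 x.1) ∧ b ∈ x.2.2 x.2.1) := by
    apply cnt_congr
    intro x
    constructor
    · rintro ⟨⟨⟨h1, h2, h3⟩, h4⟩, h5⟩; exact ⟨⟨h1, h2, h5⟩, h3⟩
    · rintro ⟨⟨h1, h2, h5⟩, h3⟩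
      refine ⟨⟨⟨h1, h2, h3⟩, ?_⟩, h5⟩
      intro hc
      exact h1.1 x.1 (huniv _ h2 h5 hc)
  -- identification 2: N_{ab×ac} equals the (b ∉ R j ∧ a,c ∈ R j) part of S1
  have hid2 : cnt (fun x : Fin n × Fin n × (Fin n → Finset (Fin 3)) =>
        InM p x.2.2 ∧ (a ∈ x.2.2 x.1 ∧ b ∈ x.2.2 x.1) ∧ (a ∈ x.2.2 x.2.1 ∧ c ∈ x.2.2 x.2.1))
      = cnt (fun x : Fin n × Fin n × (Fin n → Finset (Fin 3)) =>
        ((InM p x.2.2 ∧ a ∈ x.2.2 x.1 ∧ b ∈ x.2.2 x.1) ∧ ¬ b ∈ x.2.2 x.2.1) ∧ (a ∈ x.2.2 x.2.1 ∧ c ∈ x.2.2 x.2.1)) := by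
    apply cnt_congr
    intro x
    constructor
    · rintro ⟨h1, ⟨h2, h3⟩, h4, h5⟩
      refine ⟨⟨⟨h1, h2, h3⟩, ?_⟩, h4, h5⟩
      intro hb
      exact h1.1 x.2.1 (huniv _ h4 hb h5)
    · rintro ⟨⟨⟨h1, h2, h3⟩, _⟩, h4, h5⟩; exact ⟨h1, ⟨h2, h3⟩, h4, h5⟩
  -- the exchange bijection
  have hbij : cnt (fun x : Fin n × Fin n × (Fin n → Finset (Fin 3)) =>
        ((InM p x.2.2 ∧ a ∈ x.2.2 x.1 ∧ b ∈ x.2.2 x.2.1) ∧ ¬ c ∈ x.2.2 x.1) ∧ ¬ b ∈ x.2.2 x.1)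
      = cnt (fun x : Fin n × Fin n × (Fin n → Finset (Fin 3)) =>
        ((InM p x.2.2 ∧ a ∈ x.2.2 x.1 ∧ b ∈ x.2.2 x.1) ∧ ¬ b ∈ x.2.2 x.2.1) ∧ ¬(a ∈ x.2.2 x.2.1 ∧ c ∈ x.2.2 x.2.1)) := by
    unfold cnt
    refine Finset.card_nbij' (fun x => (x.1, x.2.1, mv b x.1 x.2.1 x.2.2))
      (fun x => (x.1, x.2.1, mv b x.2.1 x.1 x.2.2)) ?_ ?_ ?_ ?_
    · -- maps into target
      rintro ⟨i, j, R⟩ hx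
      simp only [Finset.mem_coe, Finset.mem_filter, Finset.mem_univ, true_and] at hx ⊢
      obtain ⟨⟨⟨hM, hai, hbj⟩, hci⟩, hbi⟩ := hx
      have hij : i ≠ j := fun h => hbi (h ▸ hbj)
      have hins : insert b (R i) ≠ Finset.univ := by
        intro h
        have : c ∈ insert b (R i) := h ▸ Finset.mem_univ c
        rcases Finset.mem_insert.1 this with h' | h'
        · exact hcb h'
        · exact hci h'
      have hMi := mv_InM hM hij hbj hbi hins
      refine ⟨⟨⟨hMi, ?_, ?_⟩, ?_⟩, ?_⟩
      · simp only [mv, if_pos rfl]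
        exact Finset.mem_insert_of_mem hai
      · simp only [mv, if_pos rfl]
        exact Finset.mem_insert_self b _
      · simp only [mv, if_neg hij.symm, if_pos rfl]
        exact Finset.notMem_erase b _
      · simp only [mv, if_neg hij.symm, if_pos rfl]
        rintro ⟨ha', hc'⟩
        exact hM.1 j (huniv _ (Finset.mem_of_mem_erase ha') hbj (Finset.mem_of_mem_erase hc'))
    · -- inverse maps into source
      rintro ⟨i, j, R⟩ hx
      simp only [Finset.mem_coe, Finset.mem_filter, Finset.mem_univ, true_and] at hx ⊢
      obtain ⟨⟨⟨hM, hai, hbi⟩, hbj⟩, hnac⟩ := hx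
      have hij : j ≠ i := fun h => hbj (h ▸ hbi)
      have hins : insert b (R j) ≠ Finset.univ := by
        intro h
        apply hnac
        constructor
        · have : a ∈ insert b (R j) := h ▸ Finset.mem_univ a
          rcases Finset.mem_insert.1 this with h' | h'
          · exact absurd h' hab
          · exact h'
        · have : c ∈ insert b (R j) := h ▸ Finset.mem_univ c
          rcases Finset.mem_insert.1 this with h' | h'
          · exact absurd h' hcb
          · exact h'
      have hMi := mv_InM hM hij hbi hbj hins
      have hci : c ∉ R i := fun hc => hM.1 i (huniv _ hai hbi hc)
      refine ⟨⟨⟨hMi, ?_, ?_⟩, ?_⟩, ?_⟩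
      · simp only [mv, if_neg hij.symm, if_pos rfl]
        exact Finset.mem_erase.2 ⟨hab, hai⟩
      · simp only [mv, if_pos rfl]
        exact Finset.mem_insert_self b _
      · simp only [mv, if_neg hij.symm, if_pos rfl]
        intro hc
        exact hci (Finset.mem_of_mem_erase hc)
      · simp only [mv, if_neg hij.symm, if_pos rfl]
        exact Finset.notMem_erase b _
    · -- left inverse
      rintro ⟨i, j, R⟩ hx
      simp only [Finset.mem_coe, Finset.mem_filter, Finset.mem_univ, true_and] at hx
      obtain ⟨⟨⟨hM, hai, hbj⟩, hci⟩, hbi⟩ := hx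
      have hij : i ≠ j := fun h => hbi (h ▸ hbj)
      show (i, j, mv b j i (mv b i j R)) = (i, j, R)
      rw [mv_mv hij hbj hbi]
    · -- right inverse
      rintro ⟨i, j, R⟩ hx
      simp only [Finset.mem_coe, Finset.mem_filter, Finset.mem_univ, true_and] at hx
      obtain ⟨⟨⟨hM, hai, hbi⟩, hbj⟩, hnac⟩ := hx
      have hij : j ≠ i := fun h => hbj (h ▸ hbi)
      show (i, j, mv b i j (mv b j i R)) = (i, j, R)
      rw [mv_mv hij hbi hbj]
  have key : Ncard n p {a, b} ∅ + Ncard n p {a, c} {b}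
      = Ncard n p {a} {b} + Ncard n p {a, b} {a, c} := by
    rw [e1, e2, e3, e4, hS3, hid0, hA, hS1, hS1', hid1, hid2, hbij]
    ring
  omega
end

section
/- Inclusion–exclusion for spanning trees when k = 3: for all positive integers n, p_1, p_2, p_3, the number of triples ((i,j),(R_1,…,R_n)) with i,j ∈ [n] and (R_1,…,R_n) ∈ M^n_{p_1,p_2,p_3} such that the graph α((i,j),(R_1,…,R_n)) is a tree equals N_{{1}×{2}} + N_{{1}×{3}} + N_{{2}×{3}} − N_{{1}×{2,3}} − N_{{2}×{1,3}} − N_{{3}×{1,2}} + N_{{1,2}×{1,3}} + N_{{1,2}×{2,3}} + N_{{1,3}×{2,3}}. -/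
open Finset

/-- The decidable "tree" condition for `k = 3`. -/
def treeCond (A B : Finset (Fin 3)) : Prop :=
  (0:Fin 3) ≠ alpha 0 A ∧ (1:Fin 3) ≠ alpha 1 B ∧
    s((0:Fin 3), alpha 0 A) ≠ s((1:Fin 3), alpha 1 B)

instance (A B : Finset (Fin 3)) : Decidable (treeCond A B) := by
  unfold treeCond; infer_instance

/-- The pointwise discrepancy between the tree indicator and the inclusion–exclusion sum. -/
def gInd (A B : Finset (Fin 3)) : ℤ :=
  (if treeCond A B then 1 else 0)
  - ((if ({0}:Finset (Fin 3)) ⊆ A ∧ ({1}:Finset (Fin 3)) ⊆ B then 1 else 0)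
   + (if ({0}:Finset (Fin 3)) ⊆ A ∧ ({2}:Finset (Fin 3)) ⊆ B then 1 else 0)
   + (if ({1}:Finset (Fin 3)) ⊆ A ∧ ({2}:Finset (Fin 3)) ⊆ B then 1 else 0)
   - (if ({0}:Finset (Fin 3)) ⊆ A ∧ ({1,2}:Finset (Fin 3)) ⊆ B then 1 else 0)
   - (if ({1}:Finset (Fin 3)) ⊆ A ∧ ({0,2}:Finset (Fin 3)) ⊆ B then 1 else 0)
   - (if ({2}:Finset (Fin 3)) ⊆ A ∧ ({0,1}:Finset (Fin 3)) ⊆ B then 1 else 0)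
   + (if ({0,1}:Finset (Fin 3)) ⊆ A ∧ ({0,2}:Finset (Fin 3)) ⊆ B then 1 else 0)
   + (if ({0,1}:Finset (Fin 3)) ⊆ A ∧ ({1,2}:Finset (Fin 3)) ⊆ B then 1 else 0)
   + (if ({0,2}:Finset (Fin 3)) ⊆ A ∧ ({1,2}:Finset (Fin 3)) ⊆ B then 1 else 0))

lemma g_antisym : ∀ A B : Finset (Fin 3), A ≠ Finset.univ → B ≠ Finset.univ →
    gInd A B = - gInd B A := by decide

lemma conn_helper {a b : Fin 3} (ha : a ≠ 0) (hb : b ≠ 1)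
    (hab : s((0:Fin 3), a) ≠ s((1:Fin 3), b)) {S : Set (Sym2 (Fin 3))}
    (h0 : s((0:Fin 3), a) ∈ S) (h1 : s((1:Fin 3), b) ∈ S) :
    (SimpleGraph.fromEdgeSet S).Connected := by
  have hA : (SimpleGraph.fromEdgeSet S).Adj 0 a := by
    rw [SimpleGraph.fromEdgeSet_adj]; exact ⟨h0, Ne.symm ha⟩
  have hB : (SimpleGraph.fromEdgeSet S).Adj 1 b := by
    rw [SimpleGraph.fromEdgeSet_adj]; exact ⟨h1, Ne.symm hb⟩
  have key : (SimpleGraph.fromEdgeSet S).Reachable 0 1 →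
      (SimpleGraph.fromEdgeSet S).Reachable 0 2 →
      (SimpleGraph.fromEdgeSet S).Connected := by
    intro r1 r2
    have hne' : Nonempty (Fin 3) := ⟨0⟩
    refine SimpleGraph.Connected.mk ?_
    intro x y
    fin_cases x <;> fin_cases y <;>
      first
        | exact SimpleGraph.Reachable.refl _
        | exact r1 | exact r2 | exact r1.symm | exact r2.symm
        | exact r1.symm.trans r2 | exact r2.symm.trans r1
  fin_cases a <;> fin_cases b <;>
    first
      | exact absurd rfl ha
      | exact absurd rfl hb
      | exact absurd (by decide) hab
      | exact key hA.reachable (hA.reachable.trans hB.reachable)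
      | exact key hB.reachable.symm hA.reachable
      | exact key (hA.reachable.trans hB.reachable.symm) hA.reachable

lemma tree_iff {n : ℕ} (i j : Fin n) (R : Fin n → Finset (Fin 3)) :
    IsTreeGraph ![i, j] R ↔ treeCond (R i) (R j) := by
  constructor
  · rintro ⟨h1, h2, -⟩
    refine ⟨h1 0, h1 1, fun hEq => ?_⟩
    have := h2 (a₁ := 0) (a₂ := 1) hEq
    exact absurd this (by decide)
  · rintro ⟨h0, h1, hne⟩
    refine ⟨?_, ?_, ?_⟩
    · intro t
      fin_cases t
      · exact h0
      · exact h1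
    · intro x y hxy
      fin_cases x <;> fin_cases y
      · rfl
      · exact absurd hxy hne
      · exact absurd hxy.symm hne
      · rfl
    · exact conn_helper (Ne.symm h0) (Ne.symm h1) hne ⟨0, rfl⟩ ⟨1, rfl⟩

theorem inclusion_exclusion_k3 (n : ℕ) (hn : 0 < n) (p : Fin 3 → ℕ) (hp : ∀ t, 0 < p t) :
    (Nat.card {x : Fin n × Fin n × (Fin n → Finset (Fin 3)) //
        InM p x.2.2 ∧ IsTreeGraph ![x.1, x.2.1] x.2.2} : ℤ) =
      Ncard n p {0} {1} + Ncard n p {0} {2} + Ncard n p {1} {2}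
      - Ncard n p {0} {1, 2} - Ncard n p {1} {0, 2} - Ncard n p {2} {0, 1}
      + Ncard n p {0, 1} {0, 2} + Ncard n p {0, 1} {1, 2} + Ncard n p {0, 2} {1, 2} := by
  classical
  have hL : (Nat.card {x : Fin n × Fin n × (Fin n → Finset (Fin 3)) //
        InM p x.2.2 ∧ IsTreeGraph ![x.1, x.2.1] x.2.2} : ℤ) =
      ∑ x : Fin n × Fin n × (Fin n → Finset (Fin 3)),
        (if InM p x.2.2 ∧ IsTreeGraph ![x.1, x.2.1] x.2.2 then 1 else 0) := by
    rw [Nat.card_eq_fintype_card, Fintype.card_subtype, Finset.card_filter, Nat.cast_sum]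
    simp
  have hN : ∀ A B : Finset (Fin 3), (Ncard n p A B : ℤ) =
      ∑ x : Fin n × Fin n × (Fin n → Finset (Fin 3)),
        (if InM p x.2.2 ∧ A ⊆ x.2.2 x.1 ∧ B ⊆ x.2.2 x.2.1 then 1 else 0) := by
    intro A B
    unfold Ncard
    rw [Nat.card_eq_fintype_card, Fintype.card_subtype, Finset.card_filter, Nat.cast_sum]
    simp
  have hzero : ∑ x : Fin n × Fin n × (Fin n → Finset (Fin 3)),
      (if InM p x.2.2 then gInd (x.2.2 x.1) (x.2.2 x.2.1) else 0) = 0 := by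
    have h1 : ∑ x : Fin n × Fin n × (Fin n → Finset (Fin 3)),
        (if InM p x.2.2 then gInd (x.2.2 x.1) (x.2.2 x.2.1) else 0)
        = ∑ x : Fin n × Fin n × (Fin n → Finset (Fin 3)),
            (if InM p x.2.2 then gInd (x.2.2 x.2.1) (x.2.2 x.1) else 0) := by
      apply Fintype.sum_bijective
        (fun x : Fin n × Fin n × (Fin n → Finset (Fin 3)) => (x.2.1, x.1, x.2.2))
      · exact Function.Involutive.bijective (fun x => rfl)
      · intro x; rfl
    have h2 : ∀ x : Fin n × Fin n × (Fin n → Finset (Fin 3)),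
        (if InM p x.2.2 then gInd (x.2.2 x.2.1) (x.2.2 x.1) else 0)
          = - (if InM p x.2.2 then gInd (x.2.2 x.1) (x.2.2 x.2.1) else 0) := by
      intro x
      by_cases hM : InM p x.2.2
      · rw [if_pos hM, if_pos hM, g_antisym _ _ (hM.1 _) (hM.1 _)]
      · simp [hM]
    rw [Finset.sum_congr rfl (fun x _ => h2 x)] at h1
    rw [Finset.sum_neg_distrib] at h1
    linarith
  have main : ∀ x : Fin n × Fin n × (Fin n → Finset (Fin 3)),
      (if InM p x.2.2 ∧ IsTreeGraph ![x.1, x.2.1] x.2.2 then (1:ℤ) else 0)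
        = (if InM p x.2.2 then gInd (x.2.2 x.1) (x.2.2 x.2.1) else 0)
          + ((if InM p x.2.2 ∧ ({0}:Finset (Fin 3)) ⊆ x.2.2 x.1 ∧ ({1}:Finset (Fin 3)) ⊆ x.2.2 x.2.1 then 1 else 0)
           + (if InM p x.2.2 ∧ ({0}:Finset (Fin 3)) ⊆ x.2.2 x.1 ∧ ({2}:Finset (Fin 3)) ⊆ x.2.2 x.2.1 then 1 else 0)
           + (if InM p x.2.2 ∧ ({1}:Finset (Fin 3)) ⊆ x.2.2 x.1 ∧ ({2}:Finset (Fin 3)) ⊆ x.2.2 x.2.1 then 1 else 0)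
           - (if InM p x.2.2 ∧ ({0}:Finset (Fin 3)) ⊆ x.2.2 x.1 ∧ ({1,2}:Finset (Fin 3)) ⊆ x.2.2 x.2.1 then 1 else 0)
           - (if InM p x.2.2 ∧ ({1}:Finset (Fin 3)) ⊆ x.2.2 x.1 ∧ ({0,2}:Finset (Fin 3)) ⊆ x.2.2 x.2.1 then 1 else 0)
           - (if InM p x.2.2 ∧ ({2}:Finset (Fin 3)) ⊆ x.2.2 x.1 ∧ ({0,1}:Finset (Fin 3)) ⊆ x.2.2 x.2.1 then 1 else 0)
           + (if InM p x.2.2 ∧ ({0,1}:Finset (Fin 3)) ⊆ x.2.2 x.1 ∧ ({0,2}:Finset (Fin 3)) ⊆ x.2.2 x.2.1 then 1 else 0)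
           + (if InM p x.2.2 ∧ ({0,1}:Finset (Fin 3)) ⊆ x.2.2 x.1 ∧ ({1,2}:Finset (Fin 3)) ⊆ x.2.2 x.2.1 then 1 else 0)
           + (if InM p x.2.2 ∧ ({0,2}:Finset (Fin 3)) ⊆ x.2.2 x.1 ∧ ({1,2}:Finset (Fin 3)) ⊆ x.2.2 x.2.1 then 1 else 0)) := by
    intro x
    by_cases hM : InM p x.2.2
    · simp only [hM, true_and, if_pos hM, if_true, tree_iff x.1 x.2.1 x.2.2, gInd]
      ring
    · simp [hM]
  have hmain : ∑ x : Fin n × Fin n × (Fin n → Finset (Fin 3)),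
      (if InM p x.2.2 ∧ IsTreeGraph ![x.1, x.2.1] x.2.2 then (1:ℤ) else 0)
      = ∑ x : Fin n × Fin n × (Fin n → Finset (Fin 3)),
        ((if InM p x.2.2 then gInd (x.2.2 x.1) (x.2.2 x.2.1) else 0)
          + ((if InM p x.2.2 ∧ ({0}:Finset (Fin 3)) ⊆ x.2.2 x.1 ∧ ({1}:Finset (Fin 3)) ⊆ x.2.2 x.2.1 then 1 else 0)
           + (if InM p x.2.2 ∧ ({0}:Finset (Fin 3)) ⊆ x.2.2 x.1 ∧ ({2}:Finset (Fin 3)) ⊆ x.2.2 x.2.1 then 1 else 0)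
           + (if InM p x.2.2 ∧ ({1}:Finset (Fin 3)) ⊆ x.2.2 x.1 ∧ ({2}:Finset (Fin 3)) ⊆ x.2.2 x.2.1 then 1 else 0)
           - (if InM p x.2.2 ∧ ({0}:Finset (Fin 3)) ⊆ x.2.2 x.1 ∧ ({1,2}:Finset (Fin 3)) ⊆ x.2.2 x.2.1 then 1 else 0)
           - (if InM p x.2.2 ∧ ({1}:Finset (Fin 3)) ⊆ x.2.2 x.1 ∧ ({0,2}:Finset (Fin 3)) ⊆ x.2.2 x.2.1 then 1 else 0)
           - (if InM p x.2.2 ∧ ({2}:Finset (Fin 3)) ⊆ x.2.2 x.1 ∧ ({0,1}:Finset (Fin 3)) ⊆ x.2.2 x.2.1 then 1 else 0)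
           + (if InM p x.2.2 ∧ ({0,1}:Finset (Fin 3)) ⊆ x.2.2 x.1 ∧ ({0,2}:Finset (Fin 3)) ⊆ x.2.2 x.2.1 then 1 else 0)
           + (if InM p x.2.2 ∧ ({0,1}:Finset (Fin 3)) ⊆ x.2.2 x.1 ∧ ({1,2}:Finset (Fin 3)) ⊆ x.2.2 x.2.1 then 1 else 0)
           + (if InM p x.2.2 ∧ ({0,2}:Finset (Fin 3)) ⊆ x.2.2 x.1 ∧ ({1,2}:Finset (Fin 3)) ⊆ x.2.2 x.2.1 then 1 else 0))) :=
    Finset.sum_congr rfl (fun x _ => main x)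
  simp only [Finset.sum_add_distrib, Finset.sum_sub_distrib] at hmain
  rw [hzero] at hmain
  rw [hL, hN, hN, hN, hN, hN, hN, hN, hN, hN]
  linarith [hmain]
end

section
/- Base case of Jackson's formula: for all integers k ≥ 2, n ≥ 1 and positive integers p_2,…,p_k, the number of (1,p_2,…,p_k)-colored factorizations of the cycle (1,2,…,n) satisfies C^n_{1,p_2,…,p_k} = (n!)^{k−1} · ∏_{t=2}^k binom(n−1, p_t−1). -/
open Finset

section JacksonHelpers

open Equiv Function Finset

private lemma perm_apply_inv_self {α : Type*} (f : Equiv.Perm α) (x : α) : f (f⁻¹ x) = x :=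
  f.apply_symm_apply x

private lemma invariant_iff {α β : Type*} (π : Equiv.Perm α) (φ : α → β) :
    (∀ a b, π.SameCycle a b → φ a = φ b) ↔ ∀ a, φ (π a) = φ a := by
  constructor
  · intro h a
    exact (h a (π a) ⟨1, by simp⟩).symm
  · intro h a b hab
    have hinv : ∀ c, φ (π⁻¹ c) = φ c := fun c => by
      have h2 := h (π⁻¹ c)
      rw [perm_apply_inv_self] at h2
      exact h2.symm
    obtain ⟨i, rfl⟩ := hab
    suffices H : ∀ i : ℤ, φ ((π ^ i) a) = φ a from (H i).symm
    intro i
    induction i using Int.induction_on with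
    | zero => simp
    | succ j ih =>
      have hj : (π : Equiv.Perm α) ^ ((j : ℤ) + 1) = π * π ^ (j : ℤ) := by
        rw [add_comm, zpow_add, zpow_one]
      rw [hj, Equiv.Perm.mul_apply, h, ih]
    | pred j ih =>
      have hj : (π : Equiv.Perm α) ^ (-(j : ℤ) - 1) = π⁻¹ * π ^ (-(j : ℤ)) := by
        rw [sub_eq_add_neg, add_comm, zpow_add, zpow_neg_one]
      rw [hj, Equiv.Perm.mul_apply, hinv, ih]

private lemma ivt : ∀ {m : ℕ} (f : Fin (m + 1) → ℕ), f 0 = 0 →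
    (∀ i : Fin m, f i.succ ≤ f i.castSucc + 1) →
    ∀ v, v ≤ f (Fin.last m) → ∃ j, f j = v := by
  intro m
  induction m with
  | zero =>
    intro f h0 _ v hv
    have hl : Fin.last 0 = 0 := rfl
    rw [hl, h0] at hv
    refine ⟨0, ?_⟩
    omega
  | succ m ih =>
    intro f h0 hstep v hv
    by_cases hc : v ≤ f (Fin.last m).castSucc
    · obtain ⟨j, hj⟩ := ih (fun i => f i.castSucc) (by simpa using h0)
        (fun i => hstep i.castSucc) v hc
      exact ⟨j.castSucc, hj⟩
    · push_neg at hc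
      have h1 := hstep (Fin.last m)
      rw [Fin.succ_last] at h1
      have h1' : f (Fin.last (m + 1)) ≤ f (Fin.last m).castSucc + 1 := h1
      have hv' : v ≤ f (Fin.last (m + 1)) := hv
      exact ⟨Fin.last (m + 1), by omega⟩

private def ascSet {m q : ℕ} (ψ : Fin (m + 1) → Fin (q + 1)) : Finset (Fin m) :=
  Finset.univ.filter fun i => ψ i.castSucc < ψ i.succ

private lemma filter_lt_zero {m : ℕ} (S : Finset (Fin m)) :
    S.filter (fun x => x.castSucc < (0 : Fin (m + 1))) = ∅ := by
  apply Finset.filter_false_of_mem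
  intro x _
  simp [Fin.lt_def]

private lemma filter_lt_last {m : ℕ} (S : Finset (Fin m)) :
    S.filter (fun x => x.castSucc < Fin.last m) = S := by
  apply Finset.filter_true_of_mem
  intro x _
  exact Fin.castSucc_lt_last x

private lemma filter_lt_succ {m : ℕ} (S : Finset (Fin m)) (i : Fin m) :
    S.filter (fun x => x.castSucc < i.succ) =
      if i ∈ S then insert i (S.filter fun x => x.castSucc < i.castSucc)
      else S.filter fun x => x.castSucc < i.castSucc := by
  split_ifs with h
  · ext x
    simp only [Finset.mem_filter, Finset.mem_insert, Fin.lt_def, Fin.coe_castSucc, Fin.val_succ]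
    constructor
    · rintro ⟨hxS, hlt⟩
      by_cases hx : (x : ℕ) < (i : ℕ)
      · exact Or.inr ⟨hxS, hx⟩
      · exact Or.inl (Fin.ext (by omega))
    · rintro (rfl | ⟨hxS, hlt⟩)
      · exact ⟨h, by omega⟩
      · exact ⟨hxS, by omega⟩
  · ext x
    simp only [Finset.mem_filter, Fin.lt_def, Fin.coe_castSucc, Fin.val_succ]
    constructor
    · rintro ⟨hxS, hlt⟩
      refine ⟨hxS, ?_⟩
      have hne : x ≠ i := fun he => h (he ▸ hxS)
      have hne' : (x : ℕ) ≠ (i : ℕ) := fun he => hne (Fin.ext he)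
      omega
    · rintro ⟨hxS, hlt⟩
      exact ⟨hxS, by omega⟩

private lemma mono_surj_zero {m q : ℕ} {ψ : Fin (m + 1) → Fin (q + 1)}
    (hm : Monotone ψ) (hs : Function.Surjective ψ) : ψ 0 = 0 := by
  obtain ⟨a, ha⟩ := hs 0
  have h2 := hm (Fin.zero_le a)
  rw [ha] at h2
  exact Fin.le_zero_iff.mp h2

private lemma mono_surj_last {m q : ℕ} {ψ : Fin (m + 1) → Fin (q + 1)}
    (hm : Monotone ψ) (hs : Function.Surjective ψ) : ψ (Fin.last m) = Fin.last q := by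
  obtain ⟨a, ha⟩ := hs (Fin.last q)
  have h2 := hm (Fin.le_last a)
  rw [ha] at h2
  exact le_antisymm (Fin.le_last _) h2

private lemma mono_surj_step {m q : ℕ} {ψ : Fin (m + 1) → Fin (q + 1)}
    (hm : Monotone ψ) (hs : Function.Surjective ψ) (i : Fin m) :
    (ψ i.succ : ℕ) ≤ (ψ i.castSucc : ℕ) + 1 := by
  by_contra hcon
  push_neg at hcon
  have hq : (ψ i.castSucc : ℕ) + 1 < q + 1 := by
    have := (ψ i.succ).isLt
    omega
  obtain ⟨a, ha⟩ := hs ⟨(ψ i.castSucc : ℕ) + 1, hq⟩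
  have hval : (ψ a : ℕ) = (ψ i.castSucc : ℕ) + 1 := by rw [ha]
  rcases (by omega : (a : ℕ) ≤ (i : ℕ) ∨ (i : ℕ) + 1 ≤ (a : ℕ)) with hle | hge
  · have h2 := hm (show a ≤ i.castSucc from by rw [Fin.le_def]; simpa using hle)
    rw [Fin.le_def] at h2
    omega
  · have h2 := hm (show i.succ ≤ a from by rw [Fin.le_def]; simpa using hge)
    rw [Fin.le_def] at h2
    omega

private lemma val_eq_card {m q : ℕ} {ψ : Fin (m + 1) → Fin (q + 1)}
    (hm : Monotone ψ) (hs : Function.Surjective ψ) (j : Fin (m + 1)) :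
    (ψ j : ℕ) = ((ascSet ψ).filter fun x => x.castSucc < j).card := by
  induction j using Fin.induction with
  | zero =>
    rw [filter_lt_zero, Finset.card_empty, mono_surj_zero hm hs]
    rfl
  | succ i ih =>
    rw [filter_lt_succ]
    by_cases h : i ∈ ascSet ψ
    · rw [if_pos h]
      have hnm : i ∉ (ascSet ψ).filter fun x => x.castSucc < i.castSucc := by
        simp [Finset.mem_filter]
      rw [Finset.card_insert_of_notMem hnm]
      have hlt : ψ i.castSucc < ψ i.succ := by
        have := (Finset.mem_filter.mp h).2
        exact this
      have hstep := mono_surj_step hm hs i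
      rw [Fin.lt_def] at hlt
      omega
    · rw [if_neg h]
      have hnlt : ¬ψ i.castSucc < ψ i.succ := fun hlt =>
        h (Finset.mem_filter.mpr ⟨Finset.mem_univ _, hlt⟩)
      have hmo : ψ i.castSucc ≤ ψ i.succ := hm (by rw [Fin.le_def]; simp)
      rw [Fin.le_def] at hmo
      rw [Fin.lt_def] at hnlt
      omega

private lemma card_ascSet {m q : ℕ} {ψ : Fin (m + 1) → Fin (q + 1)}
    (hm : Monotone ψ) (hs : Function.Surjective ψ) : (ascSet ψ).card = q := by
  have h1 := val_eq_card hm hs (Fin.last m)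
  rw [filter_lt_last, mono_surj_last hm hs] at h1
  simpa using h1.symm

private def ofAsc {m q : ℕ} (S : Finset (Fin m)) (hS : S.card = q) : Fin (m + 1) → Fin (q + 1) :=
  fun j => ⟨(S.filter fun x => x.castSucc < j).card,
    Nat.lt_succ_of_le (hS ▸ Finset.card_le_card (Finset.filter_subset _ _))⟩

private lemma ofAsc_mono {m q : ℕ} (S : Finset (Fin m)) (hS : S.card = q) :
    Monotone (ofAsc S hS) := by
  intro j j' hj
  rw [Fin.le_def]
  refine Finset.card_le_card fun x hx => ?_
  rw [Finset.mem_filter] at hx ⊢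
  exact ⟨hx.1, lt_of_lt_of_le hx.2 hj⟩

private lemma ofAsc_surj {m q : ℕ} (S : Finset (Fin m)) (hS : S.card = q) :
    Function.Surjective (ofAsc S hS) := by
  intro v
  have h0 : (fun j => ((ofAsc S hS j : Fin (q + 1)) : ℕ)) 0 = 0 := by
    show (S.filter fun x => x.castSucc < (0 : Fin (m + 1))).card = 0
    rw [filter_lt_zero, Finset.card_empty]
  have hstep : ∀ i : Fin m, ((ofAsc S hS i.succ : Fin (q + 1)) : ℕ) ≤
      ((ofAsc S hS i.castSucc : Fin (q + 1)) : ℕ) + 1 := by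
    intro i
    show (S.filter fun x => x.castSucc < i.succ).card ≤ _ + 1
    rw [filter_lt_succ]
    split_ifs with h
    · exact Finset.card_insert_le _ _
    · exact Nat.le_succ_of_le le_rfl
  have hlast : ((ofAsc S hS (Fin.last m) : Fin (q + 1)) : ℕ) = q := by
    show (S.filter fun x => x.castSucc < Fin.last m).card = q
    rw [filter_lt_last, hS]
  obtain ⟨j, hj⟩ := ivt (fun j => ((ofAsc S hS j : Fin (q + 1)) : ℕ)) h0 hstep (v : ℕ)
    (by show (v : ℕ) ≤ ((ofAsc S hS (Fin.last m) : Fin (q + 1)) : ℕ); rw [hlast]; omega)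
  exact ⟨j, Fin.ext hj⟩

private lemma ascSet_ofAsc {m q : ℕ} (S : Finset (Fin m)) (hS : S.card = q) :
    ascSet (ofAsc S hS) = S := by
  ext i
  simp only [ascSet, Finset.mem_filter, Finset.mem_univ, true_and]
  rw [Fin.lt_def]
  show (S.filter fun x => x.castSucc < i.castSucc).card <
      (S.filter fun x => x.castSucc < i.succ).card ↔ i ∈ S
  rw [filter_lt_succ]
  by_cases h : i ∈ S
  · rw [if_pos h, Finset.card_insert_of_notMem (by simp)]
    exact iff_of_true (Nat.lt_succ_self _) h
  · rw [if_neg h]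
    exact iff_of_false (lt_irrefl _) h

private lemma ofAsc_eq {m q : ℕ} {ψ : Fin (m + 1) → Fin (q + 1)}
    (hm : Monotone ψ) (hs : Function.Surjective ψ) :
    ofAsc (ascSet ψ) (card_ascSet hm hs) = ψ := by
  funext j
  exact Fin.ext (val_eq_card hm hs j).symm

private lemma card_monoSurj (m q : ℕ) :
    Nat.card {ψ : Fin (m + 1) → Fin (q + 1) // Monotone ψ ∧ Function.Surjective ψ} =
      m.choose q := by
  have E : {ψ : Fin (m + 1) → Fin (q + 1) // Monotone ψ ∧ Function.Surjective ψ} ≃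
      {S : Finset (Fin m) // S.card = q} :=
    { toFun := fun ψ => ⟨ascSet ψ.1, card_ascSet ψ.2.1 ψ.2.2⟩
      invFun := fun S => ⟨ofAsc S.1 S.2, ofAsc_mono S.1 S.2, ofAsc_surj S.1 S.2⟩
      left_inv := fun ψ => Subtype.ext (ofAsc_eq ψ.2.1 ψ.2.2)
      right_inv := fun S => Subtype.ext (ascSet_ofAsc S.1 S.2) }
  rw [Nat.card_congr E, Nat.card_eq_fintype_card, Fintype.card_finset_len, Fintype.card_fin]

end JacksonHelpers

section JacksonHelpers2

open Equiv Function Finset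

private abbrev Dsub (n p : ℕ) :=
  {x : Equiv.Perm (Fin n) × (Fin n → Fin p) //
    Function.Surjective x.2 ∧ ∀ a, x.2 (x.1 a) = x.2 a}

private lemma sort_key {m q : ℕ} (σ : Equiv.Perm (Fin (m + 1)))
    (ψ : Fin (m + 1) → Fin (q + 1)) (hm : Monotone ψ) :
    (ψ ∘ ⇑σ.symm) ∘ ⇑(Tuple.sort (ψ ∘ ⇑σ.symm)) = ψ := by
  have h1 : (ψ ∘ ⇑σ.symm) ∘ ⇑σ = ψ := by
    funext a; simp
  have h2 : Monotone ((ψ ∘ ⇑σ.symm) ∘ ⇑σ) := by rw [h1]; exact hm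
  have h3 := (Tuple.comp_sort_eq_comp_iff_monotone (σ := σ)).mpr h2
  rw [← h3, h1]

private lemma card_Dsub (n p : ℕ) (hn : 1 ≤ n) (hp : 1 ≤ p) :
    Nat.card (Dsub n p) = n.factorial * (n - 1).choose (p - 1) := by
  obtain ⟨m, rfl⟩ : ∃ m, n = m + 1 := ⟨n - 1, by omega⟩
  obtain ⟨q, rfl⟩ : ∃ q, p = q + 1 := ⟨p - 1, by omega⟩
  have E : Dsub (m + 1) (q + 1) ≃
      Equiv.Perm (Fin (m + 1)) ×
        {ψ : Fin (m + 1) → Fin (q + 1) // Monotone ψ ∧ Function.Surjective ψ} :=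
    { toFun := fun x => (x.1.1 * Tuple.sort x.1.2,
        ⟨x.1.2 ∘ ⇑(Tuple.sort x.1.2), Tuple.monotone_sort _,
          x.2.1.comp (Equiv.surjective _)⟩)
      invFun := fun y => ⟨(y.1 * (Tuple.sort (y.2.1 ∘ ⇑y.1.symm))⁻¹, y.2.1 ∘ ⇑y.1.symm),
        y.2.2.2.comp (Equiv.surjective _),
        by
          intro a
          have hk := sort_key y.1 y.2.1 y.2.2.1
          show (y.2.1 ∘ ⇑y.1.symm) ((y.1 * (Tuple.sort (y.2.1 ∘ ⇑y.1.symm))⁻¹) a) = _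
          have := congrFun hk ((Tuple.sort (y.2.1 ∘ ⇑y.1.symm))⁻¹ a)
          simp only [Function.comp_apply, Equiv.Perm.mul_apply, Equiv.symm_apply_apply] at this ⊢
          rw [← this, perm_apply_inv_self]⟩
      left_inv := by
        rintro ⟨⟨π, φ⟩, hsur, hinv⟩
        apply Subtype.ext
        have hφ : (φ ∘ ⇑(Tuple.sort φ)) ∘ ⇑(π * Tuple.sort φ).symm = φ := by
          funext a
          have h1 := hinv (π⁻¹ a)
          rw [perm_apply_inv_self] at h1
          simp only [Function.comp_apply, Equiv.Perm.coe_mul, mul_inv_rev]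
          show φ ((Tuple.sort φ) (((π * Tuple.sort φ)⁻¹) a)) = φ a
          rw [mul_inv_rev, Equiv.Perm.mul_apply, perm_apply_inv_self]
          exact h1.symm
        show ((π * Tuple.sort φ) * (Tuple.sort ((φ ∘ ⇑(Tuple.sort φ)) ∘ ⇑(π * Tuple.sort φ).symm))⁻¹,
            (φ ∘ ⇑(Tuple.sort φ)) ∘ ⇑(π * Tuple.sort φ).symm) = (π, φ)
        rw [Prod.ext_iff]
        refine ⟨?_, hφ⟩
        simp only [hφ]
        exact mul_inv_cancel_right _ _
      right_inv := by
        rintro ⟨σ, ψ, hmono, hsurj⟩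
        have hk := sort_key σ ψ hmono
        rw [Prod.ext_iff]
        constructor
        · show σ * (Tuple.sort (ψ ∘ ⇑σ.symm))⁻¹ * Tuple.sort (ψ ∘ ⇑σ.symm) = σ
          exact inv_mul_cancel_right _ _
        · exact Subtype.ext hk }
  rw [Nat.card_congr E, Nat.card_prod, Nat.card_eq_fintype_card, Fintype.card_perm,
    Fintype.card_fin, card_monoSurj]
  simp

private def tailP {k' n : ℕ} {p : Fin (k' + 1) → ℕ}
    (f : (t : {t : Fin (k' + 1) // t ≠ 0}) → Dsub n (p t.1)) : Equiv.Perm (Fin n) :=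
  (List.ofFn fun s : Fin k' => (f ⟨s.succ, Fin.succ_ne_zero s⟩).1.1).prod

private def piOf {k' n : ℕ} {p : Fin (k' + 1) → ℕ}
    (f : (t : {t : Fin (k' + 1) // t ≠ 0}) → Dsub n (p t.1)) :
    Fin (k' + 1) → Equiv.Perm (Fin n) :=
  fun t => if h : t = 0 then finRotate n * (tailP f)⁻¹ else (f ⟨t, h⟩).1.1

private def phiOf {k' n : ℕ} {p : Fin (k' + 1) → ℕ} (hp : ∀ t, 0 < p t)
    (f : (t : {t : Fin (k' + 1) // t ≠ 0}) → Dsub n (p t.1)) :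
    (t : Fin (k' + 1)) → Fin n → Fin (p t) :=
  fun t => if h : t = 0 then (fun _ => ⟨0, hp t⟩) else (f ⟨t, h⟩).1.2

private lemma piOf_prod {k' n : ℕ} {p : Fin (k' + 1) → ℕ}
    (f : (t : {t : Fin (k' + 1) // t ≠ 0}) → Dsub n (p t.1)) :
    (List.ofFn (piOf f)).prod = finRotate n := by
  rw [List.ofFn_succ, List.prod_cons]
  have h1 : piOf f 0 = finRotate n * (tailP f)⁻¹ := dif_pos rfl
  have h2 : (fun i : Fin k' => piOf f i.succ) =
      fun s : Fin k' => (f ⟨s.succ, Fin.succ_ne_zero s⟩).1.1 :=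
    funext fun i => dif_neg (Fin.succ_ne_zero i)
  rw [h1, h2]
  exact inv_mul_cancel_right _ _

end JacksonHelpers2

theorem jackson_base_case (k n : ℕ) [NeZero k] (hk : 2 ≤ k) (hn : 1 ≤ n)
    (p : Fin k → ℕ) (hp0 : p 0 = 1) (hp : ∀ t, 0 < p t) :
    Ccard n k p =
      n.factorial ^ (k - 1) * ∏ t ∈ Finset.univ.erase 0, (n - 1).choose (p t - 1) := by
  classical
  obtain ⟨k', rfl⟩ : ∃ k', k = k' + 1 := ⟨k - 1, by omega⟩
  have E : {x : (Fin (k' + 1) → Equiv.Perm (Fin n)) ×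
        ((t : Fin (k' + 1)) → Fin n → Fin (p t)) // IsColoredFact p x} ≃
      ((t : {t : Fin (k' + 1) // t ≠ 0}) → Dsub n (p t.1)) :=
    { toFun := fun x t => ⟨(x.1.1 t.1, x.1.2 t.1), x.2.2.1 t.1,
        (invariant_iff _ _).mp (x.2.2.2 t.1)⟩
      invFun := fun f => ⟨(piOf f, phiOf hp f), piOf_prod f, by
          intro t
          by_cases h : t = 0
          · subst h
            haveI : Subsingleton (Fin (p 0)) := by rw [hp0]; infer_instance
            intro y
            exact ⟨⟨0, hn⟩, Subsingleton.elim _ _⟩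
          · simp only [phiOf, dif_neg h]
            exact (f ⟨t, h⟩).2.1, by
          intro t
          by_cases h : t = 0
          · intro a b _
            haveI : Subsingleton (Fin (p t)) := by rw [h, hp0]; infer_instance
            exact Subsingleton.elim _ _
          · refine (invariant_iff _ _).mpr ?_
            intro a
            simp only [phiOf, piOf, dif_neg h]
            exact (f ⟨t, h⟩).2.2 a⟩
      left_inv := by
        rintro ⟨⟨π, φ⟩, hprod, hsurj, hsc⟩
        apply Subtype.ext
        rw [Prod.ext_iff]
        constructor
        · funext t
          by_cases h : t = 0
          · subst h
            rw [List.ofFn_succ, List.prod_cons] at hprod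
            exact (eq_mul_inv_iff_mul_eq.mpr hprod).symm
          · exact dif_neg h
        · funext t
          by_cases h : t = 0
          · funext a
            haveI : Subsingleton (Fin (p t)) := by rw [h, hp0]; infer_instance
            exact Subsingleton.elim _ _
          · exact dif_neg h
      right_inv := by
        intro f
        funext t
        apply Subtype.ext
        rw [Prod.ext_iff]
        exact ⟨dif_neg t.2, dif_neg t.2⟩ }
  simp only [Ccard]
  rw [Nat.card_congr E, Nat.card_pi]
  have hfac : ∀ t : {t : Fin (k' + 1) // t ≠ 0},
      Nat.card (Dsub n (p t.1)) = n.factorial * (n - 1).choose (p t.1 - 1) :=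
    fun t => card_Dsub n (p t.1) hn (hp t.1)
  rw [Finset.prod_congr rfl fun t _ => hfac t]
  rw [← Finset.prod_subtype (Finset.univ.erase (0 : Fin (k' + 1))) (fun t => by simp)
    (fun t => n.factorial * (n - 1).choose (p t - 1))]
  rw [Finset.prod_mul_distrib, Finset.prod_const,
    Finset.card_erase_of_mem (Finset.mem_univ 0), Finset.card_univ, Fintype.card_fin]
end

section
/- The map σ is a bijection from the set of valid prebiddings of size n with subset-tuple of type (p_1,…,p_k) onto the set of valid biddings of size n and type (p_1,…,p_k); in particular these two sets have the same cardinality. -/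
open Finset

/-! A linear order `≺` on `[k]×[n]` is encoded by its rank bijection
`ord : Fin k × Fin n ≃ Fin (k*n)` (`x ≺ y` iff `ord x < ord y`). -/

/-- The (injective) rank function of row `t`: `j ↦ ord (t, j)`. -/
def rowFun {k n : ℕ} (ord : Fin k × Fin n ≃ Fin (k * n)) (t : Fin k) : Fin n → Fin (k * n) :=
  fun j => ord (t, j)

theorem rowFun_injective {k n : ℕ} (ord : Fin k × Fin n ≃ Fin (k * n)) (t : Fin k) :
    Function.Injective (rowFun ord t) := fun a b h =>
  congrArg Prod.snd (ord.injective h)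

/-- The permutation `ω_t` of a prebidding: `ω_t i` is the element of `[n]` whose pair
`(t, ω_t i)` has the `i`-th smallest rank among row `t`, so that
`(t, ω_t 0) ≺ (t, ω_t 1) ≺ ⋯ ≺ (t, ω_t (n-1))`. -/
noncomputable def rowPerm {k n : ℕ} (ord : Fin k × Fin n ≃ Fin (k * n)) (t : Fin k) :
    Equiv.Perm (Fin n) :=
  (((Finset.univ.image (rowFun ord t)).orderIsoOfFin
      (by rw [Finset.card_image_of_injective _ (rowFun_injective ord t), Finset.card_univ,
        Fintype.card_fin])).toEquiv.trans
    (Equiv.subtypeEquivRight (fun x => by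
      simp only [Finset.mem_image, Finset.mem_univ, true_and, Set.mem_range]))).trans
    (Equiv.ofInjective _ (rowFun_injective ord t)).symm

/-- The map `σ` sending a prebidding `(≺, R)` to the bidding `((ω_1,…,ω_k), R)`. -/
noncomputable def sigmaMap {k n : ℕ}
    (P : (Fin k × Fin n ≃ Fin (k * n)) × (Fin n → Finset (Fin k))) :
    (Fin k → Equiv.Perm (Fin n)) × (Fin n → Finset (Fin k)) :=
  (fun t => rowPerm P.1 t, P.2)

/-- Cyclic successor on `Fin N`. -/
def cyclicSucc {N : ℕ} (m : Fin N) : Fin N :=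
  ⟨(m.val + 1) % N, Nat.mod_lt _ (Nat.lt_of_le_of_lt (Nat.zero_le _) m.isLt)⟩

/-- A valid prebidding: the greatest element of `≺` lies in the last row (type `k`), and
whenever `(t',i')` follows `(t,i)` in `≺` (cyclically, so the wrap-around from the greatest
element to the least one is included), one has `t' = α(t, R_i)`. -/
def ValidPrebidding {k n : ℕ} [NeZero k] (hn : 0 < n)
    (P : (Fin k × Fin n ≃ Fin (k * n)) × (Fin n → Finset (Fin k))) : Prop :=
  (P.1.symm ⟨k * n - 1,
      Nat.sub_lt (Nat.mul_pos (Nat.pos_of_ne_zero (NeZero.ne k)) hn) Nat.one_pos⟩).1 =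
    ⟨k - 1, Nat.sub_lt (Nat.pos_of_ne_zero (NeZero.ne k)) Nat.one_pos⟩ ∧
  ∀ m : Fin (k * n),
    (P.1.symm (cyclicSucc m)).1 = alpha (P.1.symm m).1 (P.2 (P.1.symm m).2)

/-- A valid bidding: `R ∈ M^n_{p_1,…,p_k}` and the graph
`α((ω_1(n),…,ω_{k-1}(n)), R)` is a tree. -/
def ValidBidding {k n : ℕ} [NeZero k] (hn : 0 < n) (p : Fin k → ℕ)
    (B : (Fin k → Equiv.Perm (Fin n)) × (Fin n → Finset (Fin k))) : Prop :=
  InM p B.2 ∧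
  IsTreeGraph (fun t => B.1 (Fin.castLE (Nat.sub_le k 1) t)
    ⟨n - 1, Nat.sub_lt hn Nat.one_pos⟩) B.2



section Alpha
open Fin.CommRing
variable {k : ℕ} [NeZero k]

lemma alpha_mem {t : Fin k} {R : Finset (Fin k)} (h : t ∈ R) : alpha t R = t - 1 := if_pos h

lemma alpha_not_mem {t : Fin k} {R : Finset (Fin k)} (h : t ∉ R) :
    ∃ r : ℕ, r < k ∧ alpha t R = t + (r : Fin k) ∧
      (∀ s : ℕ, 1 ≤ s → s ≤ r → t + (s : Fin k) ∈ R) ∧ t + ((r + 1 : ℕ) : Fin k) ∉ R := by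
  have hk : 0 < k := Nat.pos_of_ne_zero (NeZero.ne k)
  refine ⟨Nat.findGreatest (fun r => ∀ s ∈ Finset.Icc 1 r, t + (s : Fin k) ∈ R) (k - 1),
    lt_of_le_of_lt (Nat.findGreatest_le _) (Nat.sub_lt hk Nat.one_pos), if_neg h, ?_, ?_⟩
  · have hspec := Nat.findGreatest_spec (P := fun r => ∀ s ∈ Finset.Icc 1 r, t + (s : Fin k) ∈ R)
      (Nat.zero_le (k-1)) (by simp)
    intro s h1 h2
    exact hspec s (Finset.mem_Icc.mpr ⟨h1, h2⟩)
  · set r := Nat.findGreatest (fun r => ∀ s ∈ Finset.Icc 1 r, t + (s : Fin k) ∈ R) (k - 1) with hr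
    have hrle : r ≤ k - 1 := Nat.findGreatest_le _
    rcases eq_or_lt_of_le hrle with hEq | hlt
    · have : ((r + 1 : ℕ) : Fin k) = 0 := by
        rw [hEq]
        rw [Nat.sub_add_cancel hk]
        exact Fin.natCast_self k
      rw [this, add_zero]; exact h
    · have hng := Nat.findGreatest_is_greatest (P := fun r => ∀ s ∈ Finset.Icc 1 r, t + (s : Fin k) ∈ R)
        (Nat.lt_succ_self r) hlt
      have hspec := Nat.findGreatest_spec (P := fun r => ∀ s ∈ Finset.Icc 1 r, t + (s : Fin k) ∈ R)
        (Nat.zero_le (k-1)) (by simp)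
      intro hcon
      apply hng
      intro s hs
      rcases Finset.mem_Icc.mp hs with ⟨h1, h2⟩
      rcases eq_or_lt_of_le h2 with hEq2 | hlt2
      · rwa [hEq2]
      · exact hspec s (Finset.mem_Icc.mpr ⟨h1, Nat.lt_succ_iff.mp hlt2⟩)

lemma alpha_injective (R : Finset (Fin k)) :
    Function.Injective fun t => alpha t R := by
  have hk : 0 < k := Nat.pos_of_ne_zero (NeZero.ne k)
  classical
  -- mixed-case helper
  have mixed : ∀ t₁ t₂ : Fin k, t₁ ∈ R → t₂ ∉ R → alpha t₁ R = alpha t₂ R → False := by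
    intro t₁ t₂ h1 h2 heq
    obtain ⟨r₂, hr2k, ha2, hin2, hout2⟩ := alpha_not_mem h2
    rw [alpha_mem h1, ha2] at heq
    apply hout2
    have : t₁ = t₂ + ((r₂ : Fin k) + 1) := by
      have h' := congrArg (· + 1) heq
      simp only [sub_add_cancel] at h'
      rw [h', add_assoc]
    push_cast
    rw [← this]; exact h1
  intro t₁ t₂ heq
  simp only at heq
  by_contra hne
  by_cases h1 : t₁ ∈ R <;> by_cases h2 : t₂ ∈ R
  · rw [alpha_mem h1, alpha_mem h2] at heq
    exact hne (by
      have h' := congrArg (· + 1) heq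
      simpa [sub_add_cancel] using h')
  · exact mixed t₁ t₂ h1 h2 heq
  · exact mixed t₂ t₁ h2 h1 heq.symm
  · obtain ⟨r₁, hr1k, ha1, hin1, hout1⟩ := alpha_not_mem h1
    obtain ⟨r₂, hr2k, ha2, hin2, hout2⟩ := alpha_not_mem h2
    rw [ha1, ha2] at heq
    set d : Fin k := t₂ - t₁ with hd
    have hdne : d ≠ 0 := sub_ne_zero.mpr (Ne.symm hne)
    have hdv : 0 < d.val := Nat.pos_of_ne_zero (fun hz => hdne (Fin.ext hz))
    have hdk : d.val < k := d.isLt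
    -- r₁ = (d.val + r₂) % k
    have hfin : (r₁ : Fin k) = d + (r₂ : Fin k) := by
      have : t₁ + (r₁ : Fin k) = t₁ + (d + (r₂ : Fin k)) := by
        rw [heq, hd]; ring
      exact add_left_cancel this
    have hval : r₁ = (d.val + r₂) % k := by
      have := congrArg Fin.val hfin
      rw [Fin.val_add, Fin.val_natCast, Fin.val_natCast, Nat.mod_eq_of_lt hr1k,
        Nat.mod_eq_of_lt hr2k] at this
      exact this
    rcases Nat.lt_or_ge (d.val + r₂) k with hcase | hcase
    · rw [Nat.mod_eq_of_lt hcase] at hval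
      have hmem := hin1 d.val hdv (by omega)
      rw [Fin.cast_val_eq_self d] at hmem
      have ht2 : t₁ + d = t₂ := by rw [hd]; ring
      rw [ht2] at hmem
      exact h2 hmem
    · have hval2 : r₁ = d.val + r₂ - k := by
        rw [Nat.mod_eq_sub_mod hcase, Nat.mod_eq_of_lt (by omega)] at hval
        exact hval
      have hmem := hin2 (k - d.val) (by omega) (by omega)
      have hcast : ((k - d.val : ℕ) : Fin k) = -d := by
        have h1 : ((k - d.val : ℕ) : Fin k) + ((d.val : ℕ) : Fin k) = ((k : ℕ) : Fin k) := by
          rw [← Nat.cast_add]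
          congr 1
          omega
        rw [Fin.cast_val_eq_self d, Fin.natCast_self] at h1
        exact eq_neg_of_add_eq_zero_left h1
      rw [hcast] at hmem
      have : t₂ + -d = t₁ := by rw [hd]; ring
      rw [this] at hmem
      exact h1 hmem
end Alpha

variable {k : ℕ} [NeZero k]

lemma alpha_bijective (R : Finset (Fin k)) : Function.Bijective fun t => alpha t R :=
  Finite.injective_iff_bijective.mp (alpha_injective R)

lemma card_alpha_fiber {n : ℕ} (R : Fin n → Finset (Fin k)) (t : Fin k) :
    (Finset.univ.filter fun e : Fin k × Fin n => alpha e.1 (R e.2) = t).card = n := by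
  classical
  have hbij := fun i : Fin n => alpha_bijective (R i)
  have : (Finset.univ.filter fun e : Fin k × Fin n => alpha e.1 (R e.2) = t).card
      = (Finset.univ.filter fun e : Fin k × Fin n => e.1 = t).card := by
    apply Finset.card_bij' (fun e _ => ((alpha e.1 (R e.2)), e.2))
      (fun e _ => ((Equiv.ofBijective _ (hbij e.2)).symm e.1, e.2))
    · intro e he
      simp only [Finset.mem_filter, Finset.mem_univ, true_and] at he ⊢
      exact he
    · intro e he
      simp only [Finset.mem_filter, Finset.mem_univ, true_and] at he ⊢
      exact ((Equiv.ofBijective _ (hbij e.2)).apply_symm_apply e.1).trans he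
    · intro e he
      exact Prod.ext ((Equiv.ofBijective _ (hbij e.2)).symm_apply_apply e.1) rfl
    · intro e he
      exact Prod.ext ((Equiv.ofBijective _ (hbij e.2)).apply_symm_apply e.1) rfl
  rw [this]
  have : (Finset.univ.filter fun e : Fin k × Fin n => e.1 = t) = {t} ×ˢ Finset.univ := by
    ext e
    simp only [Finset.mem_filter, Finset.mem_univ, true_and, Finset.mem_product,
      Finset.mem_singleton, and_true]
  rw [this, Finset.card_product, Finset.card_singleton, Finset.card_univ, Fintype.card_fin,
    one_mul]

section Rank
variable {β : Type*} [LinearOrder β] {s : Finset β} {c : ℕ}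

lemma card_filter_lt_orderEmbOfFin (h : s.card = c) (j : Fin c) :
    (s.filter (· < s.orderEmbOfFin h j)).card = j.val := by
  classical
  have himg : s.filter (· < s.orderEmbOfFin h j)
      = (Finset.Iio j).image (s.orderEmbOfFin h) := by
    ext y
    simp only [Finset.mem_filter, Finset.mem_image, Finset.mem_Iio]
    constructor
    · rintro ⟨hy, hlt⟩
      have : y ∈ Set.range (s.orderEmbOfFin h) := by
        rw [Finset.range_orderEmbOfFin]; exact hy
      obtain ⟨j', hj'⟩ := this
      refine ⟨j', ?_, hj'⟩
      rw [← hj'] at hlt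
      exact (s.orderEmbOfFin h).strictMono.lt_iff_lt.mp hlt
    · rintro ⟨j', hj', rfl⟩
      exact ⟨Finset.orderEmbOfFin_mem s h j', (s.orderEmbOfFin h).strictMono hj'⟩
  rw [himg, Finset.card_image_of_injective _ (s.orderEmbOfFin h).injective, Fin.card_Iio]

lemma rank_lt_inj {x y : β} (hx : x ∈ s) (hy : y ∈ s)
    (hcard : (s.filter (· < x)).card = (s.filter (· < y)).card) : x = y := by
  classical
  have key : ∀ x y : β, x ∈ s → x < y →
      (s.filter (· < x)).card < (s.filter (· < y)).card := by
    intro x y hx hlt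
    have hsub : s.filter (· < x) ⊆ s.filter (· < y) := fun z hz => by
      rcases Finset.mem_filter.mp hz with ⟨h1, h2⟩
      exact Finset.mem_filter.mpr ⟨h1, lt_trans h2 hlt⟩
    have hmem : x ∈ s.filter (· < y) := Finset.mem_filter.mpr ⟨hx, hlt⟩
    have hnmem : x ∉ s.filter (· < x) := fun hc => lt_irrefl x (Finset.mem_filter.mp hc).2
    exact Finset.card_lt_card ((Finset.ssubset_iff_of_subset hsub).mpr ⟨x, hmem, hnmem⟩)
  rcases lt_trichotomy x y with hlt | hEq | hlt
  · exact absurd hcard (Nat.ne_of_lt (key x y hx hlt))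
  · exact hEq
  · exact absurd hcard.symm (Nat.ne_of_lt (key y x hy hlt))

end Rank

section RowPerm
variable {k n : ℕ}

lemma ord_pair (ord : Fin k × Fin n ≃ Fin (k * n)) (b : Fin (k * n)) :
    ord ((ord.symm b).1, (ord.symm b).2) = b :=
  (congrArg ord Prod.mk.eta).trans (ord.apply_symm_apply b)

lemma rowPerm_apply_rank (ord : Fin k × Fin n ≃ Fin (k * n)) (t : Fin k) (j : Fin n)
    (h : (Finset.univ.image (rowFun ord t)).card = n) :
    ord (t, rowPerm ord t j) = (Finset.univ.image (rowFun ord t)).orderEmbOfFin h j := by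
  show rowFun ord t (rowPerm ord t j) = _
  rw [rowPerm]
  simp only [Equiv.trans_apply]
  exact (Equiv.apply_ofInjective_symm (rowFun_injective ord t) _).trans rfl

lemma rowPerm_eq_of_rank (ord : Fin k × Fin n ≃ Fin (k * n)) (t : Fin k) (j : Fin n)
    (i : Fin n) (hrank : (Finset.univ.filter fun i' => ord (t, i') < ord (t, i)).card = j.val) :
    rowPerm ord t j = i := by
  classical
  set F := Finset.univ.image (rowFun ord t) with hF
  have hcard : F.card = n := by
    rw [hF, Finset.card_image_of_injective _ (rowFun_injective ord t), Finset.card_univ,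
      Fintype.card_fin]
  have key : ∀ i : Fin n, (F.filter (· < ord (t, i))).card
      = (Finset.univ.filter fun i' => ord (t, i') < ord (t, i)).card := by
    intro i
    rw [hF, Finset.filter_image, Finset.card_image_of_injective _ (rowFun_injective ord t)]
    rfl
  have h1 : (F.filter (· < ord (t, rowPerm ord t j))).card = j.val := by
    rw [rowPerm_apply_rank ord t j hcard]
    exact card_filter_lt_orderEmbOfFin hcard j
  have h2 : ord (t, rowPerm ord t j) = ord (t, i) := by
    apply rank_lt_inj (s := F)
    · rw [hF]; exact Finset.mem_image_of_mem _ (Finset.mem_univ _)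
    · rw [hF]; exact Finset.mem_image_of_mem _ (Finset.mem_univ _)
    · rw [h1, key, hrank]
  have := ord.injective h2
  exact congrArg Prod.snd this

lemma symm_snd_eq_rowPerm (ord : Fin k × Fin n ≃ Fin (k * n)) (m : Fin (k * n)) (j : Fin n)
    (hj : (Finset.univ.filter fun m' => m' < m ∧ (ord.symm m').1 = (ord.symm m).1).card
      = j.val) :
    rowPerm ord ((ord.symm m).1) j = (ord.symm m).2 := by
  classical
  set t := (ord.symm m).1 with ht
  have hm : ord (t, (ord.symm m).2) = m := ord_pair ord m
  apply rowPerm_eq_of_rank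
  rw [← hj]
  apply Finset.card_bij' (fun i' _ => ord (t, i')) (fun m' _ => (ord.symm m').2)
  · intro a ha
    simp only [Finset.mem_filter, Finset.mem_univ, true_and] at ha ⊢
    rw [hm] at ha
    refine ⟨ha, ?_⟩
    rw [Equiv.symm_apply_apply]
  · intro b hb
    simp only [Finset.mem_filter, Finset.mem_univ, true_and] at hb ⊢
    have hbb : ord ((ord.symm b).1, (ord.symm b).2) = b := ord_pair ord b
    rw [hb.2] at hbb
    rw [hbb, hm]
    exact hb.1
  · intro a _
    rw [Equiv.symm_apply_apply]
  · intro b hb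
    simp only [Finset.mem_filter, Finset.mem_univ, true_and] at hb
    have hbb : ord ((ord.symm b).1, (ord.symm b).2) = b := ord_pair ord b
    rw [hb.2] at hbb
    exact hbb

lemma card_row_fiber (ord : Fin k × Fin n ≃ Fin (k * n)) (t : Fin k) :
    (Finset.univ.filter fun m => (ord.symm m).1 = t).card = n := by
  classical
  have : (Finset.univ.filter fun m => (ord.symm m).1 = t)
      = Finset.univ.image (rowFun ord t) := by
    ext m
    simp only [Finset.mem_filter, Finset.mem_univ, true_and, Finset.mem_image, rowFun]
    constructor
    · intro h
      refine ⟨(ord.symm m).2, ?_⟩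
      have := ord_pair ord m
      rwa [h] at this
    · rintro ⟨i, rfl⟩
      rw [Equiv.symm_apply_apply]
  rw [this, Finset.card_image_of_injective _ (rowFun_injective ord t), Finset.card_univ,
    Fintype.card_fin]

end RowPerm

section Walk
variable {k n : ℕ} [NeZero k]

/-- One step of the greedy walk: current vertex and visit counts. -/
def wstep (R : Fin n → Finset (Fin k)) (ω : Fin k → Equiv.Perm (Fin n)) (hn : 0 < n)
    (s : Fin k × (Fin k → ℕ)) : Fin k × (Fin k → ℕ) :=
  (alpha s.1 (R (ω s.1 ⟨s.2 s.1 % n, Nat.mod_lt _ hn⟩)),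
    Function.update s.2 s.1 (s.2 s.1 + 1))

def wwalk (R : Fin n → Finset (Fin k)) (ω : Fin k → Equiv.Perm (Fin n)) (hn : 0 < n)
    (start : Fin k) (m : ℕ) : Fin k × (Fin k → ℕ) :=
  (wstep R ω hn)^[m] (start, fun _ => 0)

variable (R : Fin n → Finset (Fin k)) (ω : Fin k → Equiv.Perm (Fin n)) (hn : 0 < n)
  (start : Fin k)

def wrow (m : ℕ) : Fin k := (wwalk R ω hn start m).1

def wcnt (m : ℕ) (t : Fin k) : ℕ := (wwalk R ω hn start m).2 t

def wcol (m : ℕ) : Fin n :=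
  ω (wrow R ω hn start m) ⟨wcnt R ω hn start m (wrow R ω hn start m) % n, Nat.mod_lt _ hn⟩

lemma wrow_zero : wrow R ω hn start 0 = start := rfl

lemma wcnt_zero (t : Fin k) : wcnt R ω hn start 0 t = 0 := rfl

lemma wwalk_succ (m : ℕ) :
    wwalk R ω hn start (m + 1) = wstep R ω hn (wwalk R ω hn start m) := by
  unfold wwalk
  rw [Function.iterate_succ_apply']

lemma wrow_succ (m : ℕ) :
    wrow R ω hn start (m + 1) = alpha (wrow R ω hn start m) (R (wcol R ω hn start m)) := by
  unfold wrow wcol wcnt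
  rw [wwalk_succ]
  rfl

lemma wcnt_succ (m : ℕ) (t : Fin k) :
    wcnt R ω hn start (m + 1) t
      = wcnt R ω hn start m t + (if wrow R ω hn start m = t then 1 else 0) := by
  unfold wcnt wrow
  rw [wwalk_succ]
  show Function.update (wwalk R ω hn start m).2 (wwalk R ω hn start m).1
    ((wwalk R ω hn start m).2 (wwalk R ω hn start m).1 + 1) t = _
  rcases eq_or_ne ((wwalk R ω hn start m).1) t with h | h
  · rw [if_pos h, ← h, Function.update_self]
  · rw [if_neg h, Function.update_of_ne (Ne.symm h), add_zero]

lemma wcnt_mono {a b : ℕ} (hab : a ≤ b) (t : Fin k) :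
    wcnt R ω hn start a t ≤ wcnt R ω hn start b t := by
  induction b with
  | zero =>
    have : a = 0 := by omega
    rw [this]
  | succ b ih =>
    rcases Nat.lt_or_ge a (b + 1) with h | h
    · have := ih (by omega)
      rw [wcnt_succ]
      split <;> omega
    · have : a = b + 1 := by omega
      rw [this]

/-- `wcnt` as a filter cardinality. -/
lemma wcnt_eq_card (m : ℕ) (t : Fin k) :
    wcnt R ω hn start m t
      = ((Finset.range m).filter fun m' => wrow R ω hn start m' = t).card := by
  induction m with
  | zero => simp [wcnt_zero]
  | succ m ih =>
    rw [wcnt_succ, ih, Finset.range_add_one, Finset.filter_insert]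
    split
    · rw [Finset.card_insert_of_notMem (by simp)]
    · rw [add_zero]

lemma wcnt_sum (m : ℕ) : ∑ t, wcnt R ω hn start m t = m := by
  induction m with
  | zero => simp [wcnt_zero]
  | succ m ih =>
    have : ∀ t, wcnt R ω hn start (m+1) t
        = wcnt R ω hn start m t + (if wrow R ω hn start m = t then 1 else 0) :=
      fun t => wcnt_succ R ω hn start m t
    rw [Finset.sum_congr rfl (fun t _ => this t), Finset.sum_add_distrib, ih,
      Finset.sum_ite_eq (Finset.univ) (wrow R ω hn start m) (fun _ => 1)]
    simp

/-- Balance identity: in-count + [row 0 = t] = out-count + [row m = t]. -/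
lemma wbalance (m : ℕ) (t : Fin k) :
    ((Finset.range m).filter fun m' => wrow R ω hn start (m' + 1) = t).card
        + (if wrow R ω hn start 0 = t then 1 else 0)
      = wcnt R ω hn start m t + (if wrow R ω hn start m = t then 1 else 0) := by
  induction m with
  | zero => simp [wcnt_zero]
  | succ m ih =>
    rw [Finset.range_add_one, Finset.filter_insert, wcnt_succ]
    split
    · rw [Finset.card_insert_of_notMem (by simp)]
      omega
    · omega

lemma wcnt_le (M : ℕ)
    (good : ∀ m' < M, wcnt R ω hn start m' (wrow R ω hn start m') < n) :
    ∀ m ≤ M, ∀ t, wcnt R ω hn start m t ≤ n := by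
  intro m
  induction m with
  | zero => intro _ t; rw [wcnt_zero]; omega
  | succ m ih =>
    intro hm t
    rw [wcnt_succ]
    split
    · rename_i h
      have := good m (by omega)
      rw [h] at this
      omega
    · have := ih (by omega) t
      omega

lemma wcnt_const_of_no_visit {a b : ℕ} (hab : a ≤ b) (t : Fin k)
    (h : ∀ x, a ≤ x → x < b → wrow R ω hn start x ≠ t) :
    wcnt R ω hn start b t = wcnt R ω hn start a t := by
  induction b with
  | zero =>
    have : a = 0 := by omega
    rw [this]
  | succ b ih =>
    rcases Nat.lt_or_ge a (b + 1) with hlt | hge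
    · rw [wcnt_succ, if_neg (h b (by omega) (by omega)), add_zero]
      exact ih (by omega) (fun x hx1 hx2 => h x hx1 (by omega))
    · have : a = b + 1 := by omega
      rw [this]

lemma wedge_inj_lt {a b M : ℕ}
    (good : ∀ m' < M, wcnt R ω hn start m' (wrow R ω hn start m') < n)
    (hab : a < b) (hb : b < M)
    (hrow : wrow R ω hn start a = wrow R ω hn start b)
    (hcol : wcol R ω hn start a = wcol R ω hn start b) : False := by
  have gca : wcnt R ω hn start a (wrow R ω hn start a) < n := good a (by omega)
  have gcb : wcnt R ω hn start b (wrow R ω hn start a) < n := by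
    have := good b hb; rwa [← hrow] at this
  have hcnt : wcnt R ω hn start a (wrow R ω hn start a)
      = wcnt R ω hn start b (wrow R ω hn start a) := by
    unfold wcol at hcol
    simp only [show wrow R ω hn start b = wrow R ω hn start a from hrow.symm] at hcol
    have := (ω (wrow R ω hn start a)).injective hcol
    have hval := congrArg Fin.val this
    simpa [Nat.mod_eq_of_lt gca, Nat.mod_eq_of_lt gcb] using hval
  have h1 : wcnt R ω hn start (a+1) (wrow R ω hn start a)
      = wcnt R ω hn start a (wrow R ω hn start a) + 1 := by
    rw [wcnt_succ, if_pos rfl]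
  have h2 : wcnt R ω hn start (a+1) (wrow R ω hn start a)
      ≤ wcnt R ω hn start b (wrow R ω hn start a) :=
    wcnt_mono R ω hn start (by omega) _
  omega

lemma wedge_inj {M : ℕ}
    (good : ∀ m' < M, wcnt R ω hn start m' (wrow R ω hn start m') < n)
    {a b : ℕ} (ha : a < M) (hb : b < M)
    (hrow : wrow R ω hn start a = wrow R ω hn start b)
    (hcol : wcol R ω hn start a = wcol R ω hn start b) : a = b := by
  rcases Nat.lt_trichotomy a b with h | h | h
  · exact (wedge_inj_lt R ω hn start good h hb hrow hcol).elim
  · exact h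
  · exact (wedge_inj_lt R ω hn start good h ha hrow.symm hcol.symm).elim

lemma win_le (M : ℕ)
    (good : ∀ m' < M, wcnt R ω hn start m' (wrow R ω hn start m') < n)
    (t : Fin k) (E : Finset (Fin k × Fin n))
    (hE : ∀ m' < M, wrow R ω hn start (m'+1) = t →
      (wrow R ω hn start m', wcol R ω hn start m') ∈ E) :
    ((Finset.range M).filter fun m' => wrow R ω hn start (m'+1) = t).card ≤ E.card := by
  classical
  apply Finset.card_le_card_of_injOn
    (fun m' => (wrow R ω hn start m', wcol R ω hn start m'))
  · intro a ha
    rcases Finset.mem_filter.mp ha with ⟨ha1, ha2⟩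
    exact hE a (Finset.mem_range.mp ha1) ha2
  · intro a ha b hb heq
    rcases Finset.mem_filter.mp ha with ⟨ha1, _⟩
    rcases Finset.mem_filter.mp hb with ⟨hb1, _⟩
    have h1 := congrArg Prod.fst heq
    have h2 := congrArg Prod.snd heq
    exact wedge_inj R ω hn start good (Finset.mem_range.mp ha1) (Finset.mem_range.mp hb1) h1 h2

def lastIdx : Fin n := ⟨n - 1, Nat.sub_lt hn Nat.one_pos⟩

def fe (t : Fin k) : Fin k := alpha t (R (ω t (lastIdx hn)))

lemma wcol_spec {m : ℕ} {s : Fin k} (hr : wrow R ω hn start m = s) (i : Fin n)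
    (hc : wcol R ω hn start m = ω s i) (hlt : wcnt R ω hn start m s < n) :
    wcnt R ω hn start m s = i.val := by
  unfold wcol at hc
  simp only [hr] at hc
  have hval := congrArg Fin.val ((ω s).injective hc)
  simpa [Nat.mod_eq_of_lt hlt] using hval

theorem walk_no_overflow
    (hfib : ∀ t : Fin k,
      (Finset.univ.filter fun e : Fin k × Fin n => alpha e.1 (R e.2) = t).card = n)
    (D : Fin k → ℕ) (root : Fin k) (hroot : D root = 0)
    (hD : ∀ t, t ≠ root → D t = D (fe R ω hn t) + 1) :
    ∀ m < k * n, wcnt R ω hn (fe R ω hn root) m (wrow R ω hn (fe R ω hn root) m) < n := by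
  classical
  intro m
  induction m using Nat.strong_induction_on with
  | _ m IH =>
    intro hmN
    by_contra hbad
    push_neg at hbad
    set st := fe R ω hn root with hst
    have good : ∀ m' < m, wcnt R ω hn st m' (wrow R ω hn st m') < n :=
      fun m' hm' => IH m' hm' (by omega)
    have hle : ∀ m' ≤ m, ∀ t, wcnt R ω hn st m' t ≤ n := wcnt_le R ω hn st m good
    have hcnt_t : wcnt R ω hn st m (wrow R ω hn st m) = n :=
      le_antisymm (hle m le_rfl _) hbad
    -- in-degree bound for the current vertex
    have hin_le : ∀ t : Fin k,
        ((range m).filter fun m' => wrow R ω hn st (m'+1) = t).card ≤ n := by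
      intro t
      have := win_le R ω hn st m good t
        (Finset.univ.filter fun e : Fin k × Fin n => alpha e.1 (R e.2) = t) ?_
      · rwa [hfib] at this
      · intro m' _ hrow
        simp only [Finset.mem_filter, Finset.mem_univ, true_and]
        rw [← wrow_succ]; exact hrow
    have hbal := wbalance R ω hn st m (wrow R ω hn st m)
    rw [hcnt_t, if_pos rfl] at hbal
    have hrow0 : wrow R ω hn st 0 = wrow R ω hn st m := by
      by_contra hne
      rw [if_neg hne] at hbal
      have := hin_le (wrow R ω hn st m)
      omega
    have hin_eq : ((range m).filter fun m' =>
        wrow R ω hn st (m'+1) = wrow R ω hn st m).card = n := by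
      rw [if_pos hrow0] at hbal
      have := hin_le (wrow R ω hn st m)
      omega
    -- the image of the in-steps is the whole fiber
    have himg : ((range m).filter fun m' => wrow R ω hn st (m'+1) = wrow R ω hn st m).image
          (fun m' => (wrow R ω hn st m', wcol R ω hn st m'))
        = Finset.univ.filter fun e : Fin k × Fin n => alpha e.1 (R e.2) = wrow R ω hn st m := by
      apply Finset.eq_of_subset_of_card_le
      · intro e he
        rcases Finset.mem_image.mp he with ⟨m', hm', rfl⟩
        rcases Finset.mem_filter.mp hm' with ⟨hm1, hm2⟩
        simp only [Finset.mem_filter, Finset.mem_univ, true_and]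
        rw [← wrow_succ]; exact hm2
      · rw [hfib]
        rw [Finset.card_image_of_injOn, hin_eq]
        intro a ha b hb heq
        rcases Finset.mem_filter.mp ha with ⟨ha1, _⟩
        rcases Finset.mem_filter.mp hb with ⟨hb1, _⟩
        have heq' : (wrow R ω hn st a, wcol R ω hn st a)
            = (wrow R ω hn st b, wcol R ω hn st b) := heq
        rw [Prod.ext_iff] at heq'
        exact wedge_inj R ω hn st good (Finset.mem_range.mp ha1) (Finset.mem_range.mp hb1)
          heq'.1 heq'.2
    -- hence the last edge out of the root has been used, so cnt at root is full
    have hcntroot : wcnt R ω hn st m root = n := by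
      have hmem : (root, ω root (lastIdx hn)) ∈
          Finset.univ.filter fun e : Fin k × Fin n => alpha e.1 (R e.2) = wrow R ω hn st m := by
        simp only [Finset.mem_filter, Finset.mem_univ, true_and]
        show fe R ω hn root = _
        exact (wrow_zero R ω hn st).symm.trans hrow0
      rw [← himg] at hmem
      rcases Finset.mem_image.mp hmem with ⟨m', hm', heq⟩
      rcases Finset.mem_filter.mp hm' with ⟨hm1, _⟩
      have hm'lt : m' < m := Finset.mem_range.mp hm1
      have heq' : (wrow R ω hn st m', wcol R ω hn st m') = (root, ω root (lastIdx hn)) := heq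
      rw [Prod.ext_iff] at heq'
      have hr : wrow R ω hn st m' = root := heq'.1
      have hlt : wcnt R ω hn st m' root < n := by
        have := good m' hm'lt; rwa [hr] at this
      have hc : wcnt R ω hn st m' root = n - 1 :=
        wcol_spec R ω hn st hr (lastIdx hn) heq'.2 hlt
      have h1 : wcnt R ω hn st (m'+1) root = n := by
        rw [wcnt_succ, if_pos hr, hc]
        omega
      have h2 := wcnt_mono R ω hn st (show m'+1 ≤ m by omega) root
      have h3 := hle m le_rfl root
      omega
    -- chain step
    have hchain : ∀ s, wcnt R ω hn st m s < n → wcnt R ω hn st m (fe R ω hn s) < n := by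
      intro s hs
      have hunused : ∀ m' < m,
          (wrow R ω hn st m', wcol R ω hn st m') ≠ (s, ω s (lastIdx hn)) := by
        intro m' hm' heq
        rw [Prod.ext_iff] at heq
        have hr : wrow R ω hn st m' = s := heq.1
        have hlt : wcnt R ω hn st m' s < n := by
          have := good m' hm'; rwa [hr] at this
        have hc : wcnt R ω hn st m' s = n - 1 :=
          wcol_spec R ω hn st hr (lastIdx hn) heq.2 hlt
        have h1 : wcnt R ω hn st (m'+1) s = n := by
          rw [wcnt_succ, if_pos hr, hc]; omega
        have h2 := wcnt_mono R ω hn st (show m'+1 ≤ m by omega) s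
        omega
      have hin2 : ((range m).filter fun m' => wrow R ω hn st (m'+1) = fe R ω hn s).card
          ≤ n - 1 := by
        have hmemfib : (s, ω s (lastIdx hn)) ∈
            Finset.univ.filter fun e : Fin k × Fin n => alpha e.1 (R e.2) = fe R ω hn s := by
          simp only [Finset.mem_filter, Finset.mem_univ, true_and]
          rfl
        have := win_le R ω hn st m good (fe R ω hn s)
          ((Finset.univ.filter fun e : Fin k × Fin n => alpha e.1 (R e.2) = fe R ω hn s).erase
            (s, ω s (lastIdx hn))) ?_
        · rwa [Finset.card_erase_of_mem hmemfib, hfib] at this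
        · intro m' hm' hrow
          apply Finset.mem_erase.mpr
          refine ⟨hunused m' hm', ?_⟩
          simp only [Finset.mem_filter, Finset.mem_univ, true_and]
          rw [← wrow_succ]; exact hrow
      have hbal2 := wbalance R ω hn st m (fe R ω hn s)
      rw [hrow0] at hbal2
      split at hbal2 <;> omega
    -- there is a vertex with spare capacity
    have hex : ∃ s, wcnt R ω hn st m s < n := by
      by_contra h
      push_neg at h
      have hsum := wcnt_sum R ω hn st m
      have : (Finset.univ : Finset (Fin k)).card * n ≤ ∑ t, wcnt R ω hn st m t := by
        rw [← Finset.sum_const_nat (m := n) (fun _ _ => rfl)]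
        exact Finset.sum_le_sum (fun t _ => h t)
      rw [Finset.card_univ, Fintype.card_fin] at this
      omega
    -- descend along D to the root
    obtain ⟨s₀, hs₀⟩ := hex
    have hdesc : ∀ d, ∀ s, D s ≤ d → wcnt R ω hn st m s < n →
        wcnt R ω hn st m root < n := by
      intro d
      induction d with
      | zero =>
        intro s hds hc
        rcases eq_or_ne s root with rfl | hne
        · exact hc
        · rw [hD s hne] at hds; omega
      | succ d ih =>
        intro s hds hc
        rcases eq_or_ne s root with rfl | hne
        · exact hc
        · exact ih (fe R ω hn s) (by have := hD s hne; omega) (hchain s hc)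
    have := hdesc (D s₀) s₀ le_rfl hs₀
    omega

theorem wcnt_full (goodN : ∀ m < k * n, wcnt R ω hn start m (wrow R ω hn start m) < n)
    (t : Fin k) : wcnt R ω hn start (k * n) t = n := by
  classical
  have hle := wcnt_le R ω hn start (k * n) goodN
  by_contra hne
  have hlt : wcnt R ω hn start (k * n) t < n :=
    lt_of_le_of_ne (hle (k * n) le_rfl t) hne
  have hsum := wcnt_sum R ω hn start (k * n)
  have : ∑ t', wcnt R ω hn start (k * n) t' < ∑ _t' : Fin k, n :=
    Finset.sum_lt_sum (fun i _ => hle (k * n) le_rfl i) ⟨t, Finset.mem_univ t, hlt⟩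
  rw [Finset.sum_const, Finset.card_univ, Fintype.card_fin, smul_eq_mul] at this
  omega

theorem wrow_kn
    (hfib : ∀ t : Fin k,
      (Finset.univ.filter fun e : Fin k × Fin n => alpha e.1 (R e.2) = t).card = n)
    (goodN : ∀ m < k * n, wcnt R ω hn start m (wrow R ω hn start m) < n) :
    wrow R ω hn start (k * n) = wrow R ω hn start 0 := by
  classical
  have hbal := wbalance R ω hn start (k * n) (wrow R ω hn start (k * n))
  rw [wcnt_full R ω hn start goodN, if_pos rfl] at hbal
  have hin : ((range (k * n)).filter fun m' =>
      wrow R ω hn start (m'+1) = wrow R ω hn start (k * n)).card ≤ n := by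
    have := win_le R ω hn start (k * n) goodN (wrow R ω hn start (k * n))
      (Finset.univ.filter fun e : Fin k × Fin n =>
        alpha e.1 (R e.2) = wrow R ω hn start (k * n)) ?_
    · rwa [hfib] at this
    · intro m' _ hrow
      simp only [Finset.mem_filter, Finset.mem_univ, true_and]
      rw [← wrow_succ]; exact hrow
  by_contra hne
  rw [if_neg (fun h => hne h.symm)] at hbal
  omega

theorem wrow_last_eq_root
    (hfib : ∀ t : Fin k,
      (Finset.univ.filter fun e : Fin k × Fin n => alpha e.1 (R e.2) = t).card = n)
    (D : Fin k → ℕ) (root : Fin k) (hroot : D root = 0)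
    (hD : ∀ t, t ≠ root → D t = D (fe R ω hn t) + 1) :
    wrow R ω hn (fe R ω hn root) (k * n - 1) = root := by
  classical
  set st := fe R ω hn root with hst
  have goodN : ∀ m < k * n, wcnt R ω hn st m (wrow R ω hn st m) < n :=
    walk_no_overflow R ω hn hfib D root hroot hD
  have hkn : 0 < k * n := Nat.mul_pos (Nat.pos_of_ne_zero (NeZero.ne k)) hn
  have hfull : ∀ t, wcnt R ω hn st (k * n) t = n := wcnt_full R ω hn st goodN
  have hvis : ∀ t : Fin k, ((range (k * n)).filter fun m' => wrow R ω hn st m' = t).Nonempty := by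
    intro t
    rw [← Finset.card_pos, ← wcnt_eq_card, hfull]
    omega
  obtain ⟨L, hLmem, hLmax⟩ : ∃ L : Fin k → ℕ,
      (∀ t, L t ∈ (range (k * n)).filter fun m' => wrow R ω hn st m' = t) ∧
      (∀ t, ∀ x < k * n, wrow R ω hn st x = t → x ≤ L t) :=
    ⟨fun t => ((range (k * n)).filter fun m' => wrow R ω hn st m' = t).max' (hvis t),
      fun t => Finset.max'_mem _ _,
      fun t x hx hr => Finset.le_max' _ x (Finset.mem_filter.mpr ⟨Finset.mem_range.mpr hx, hr⟩)⟩
  have hrowL : ∀ t, wrow R ω hn st (L t) = t := fun t => (Finset.mem_filter.mp (hLmem t)).2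
  have hLlt : ∀ t, L t < k * n := fun t => Finset.mem_range.mp (Finset.mem_filter.mp (hLmem t)).1
  have hcntL : ∀ t, wcnt R ω hn st (L t) t = n - 1 := by
    intro t
    have h1 : wcnt R ω hn st (k * n) t = wcnt R ω hn st (L t + 1) t := by
      apply wcnt_const_of_no_visit R ω hn st (by have := hLlt t; omega) t
      intro x hx1 hx2 hr
      have := hLmax t x hx2 hr
      omega
    have h2 : wcnt R ω hn st (L t + 1) t = wcnt R ω hn st (L t) t + 1 := by
      rw [wcnt_succ, if_pos (hrowL t)]
    rw [hfull] at h1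
    omega
  have hcolL : ∀ t, wcol R ω hn st (L t) = ω t (lastIdx hn) := by
    intro t
    show ω (wrow R ω hn st (L t)) ⟨wcnt R ω hn st (L t) (wrow R ω hn st (L t)) % n, _⟩ = _
    simp only [hrowL t, hcntL t]
    congr 1
    apply Fin.ext
    show (n - 1) % n = n - 1
    exact Nat.mod_eq_of_lt (by omega)
  have hrowL1 : ∀ t, wrow R ω hn st (L t + 1) = fe R ω hn t := by
    intro t
    rw [wrow_succ, hcolL t, hrowL t]
    rfl
  have hz : wrow R ω hn st (k * n - 1) = wrow R ω hn st (k * n - 1) := rfl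
  set z := wrow R ω hn st (k * n - 1) with hzdef
  have hLz : L z = k * n - 1 := by
    apply le_antisymm
    · have := hLlt z; omega
    · exact hLmax z (k * n - 1) (by omega) rfl
  by_contra hne
  have hznr : z ≠ root := hne
  have hstep : ∀ t, t ≠ z → L t < L (fe R ω hn t) := by
    intro t ht
    have h1 : L t ≠ k * n - 1 := by
      intro hc
      apply ht
      rw [← hrowL t, hc]
    have h2 : L t + 1 < k * n := by
      have := hLlt t
      omega
    exact lt_of_lt_of_le (Nat.lt_succ_self _) (hLmax (fe R ω hn t) (L t + 1) h2 (hrowL1 t))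
  have hrowN : wrow R ω hn st (k * n) = st := wrow_kn R ω hn st hfib goodN
  have hfez : fe R ω hn z = st := by
    have h1 : wrow R ω hn st (L z + 1) = fe R ω hn z := hrowL1 z
    rw [hLz, show k * n - 1 + 1 = k * n by omega, hrowN] at h1
    exact h1.symm
  have claim : ∀ c, ∀ t, k * n - L t ≤ c → L root < L t → t ≠ z → D z < D t := by
    intro c
    induction c with
    | zero =>
      intro t h1 _ _
      have := hLlt t
      omega
    | succ c ih =>
      intro t h1 h2 h3
      have htroot : t ≠ root := fun hc => lt_irrefl _ (hc ▸ h2)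
      have hu : L t < L (fe R ω hn t) := hstep t h3
      have hD' : D t = D (fe R ω hn t) + 1 := hD t htroot
      rcases eq_or_ne (fe R ω hn t) z with hfz | hfz
      · rw [hfz] at hD'
        omega
      · have h2' : L root < L (fe R ω hn t) := lt_trans h2 hu
        have := ih (fe R ω hn t) (by omega) h2' hfz
        omega
  have hLr : L root < L (fe R ω hn root) := hstep root (Ne.symm hznr)
  have hDz : D z = D (fe R ω hn root) + 1 := by
    have h1 := hD z hznr
    rw [hfez, hst] at h1
    exact h1
  rcases eq_or_ne (fe R ω hn root) z with hc | hc
  · rw [hc] at hDz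
    omega
  · have h1 := claim (k * n) (fe R ω hn root) (by omega) hLr hc
    omega

end Walk

lemma cyclicSucc_of_lt {N : ℕ} {m : Fin N} (h : m.val + 1 < N) :
    cyclicSucc m = ⟨m.val + 1, h⟩ :=
  Fin.ext (Nat.mod_eq_of_lt h)

theorem prebid_tree {k n : ℕ} [NeZero k] (hn : 0 < n)
    (o : Fin k × Fin n ≃ Fin (k * n)) (R : Fin n → Finset (Fin k))
    (hv : ValidPrebidding hn (o, R)) :
    IsTreeGraph (fun t => rowPerm o (Fin.castLE (Nat.sub_le k 1) t)
      ⟨n - 1, Nat.sub_lt hn Nat.one_pos⟩) R := by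
  classical
  obtain ⟨hv1, hv2⟩ := hv
  have hk : 0 < k := Nat.pos_of_ne_zero (NeZero.ne k)
  have hkn : 0 < k * n := Nat.mul_pos hk hn
  have hlast : k * n - 1 < k * n := Nat.sub_lt hkn Nat.one_pos
  have hrootlt : k - 1 < k := Nat.sub_lt hk Nat.one_pos
  -- fibers
  have hfib : ∀ t, (Finset.univ.filter fun m : Fin (k * n) => (o.symm m).1 = t).card = n :=
    card_row_fiber o
  have hvis : ∀ t, (Finset.univ.filter fun m : Fin (k * n) => (o.symm m).1 = t).Nonempty := by
    intro t; rw [← Finset.card_pos, hfib]; omega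
  obtain ⟨L, hLmem, hLmax⟩ : ∃ L : Fin k → Fin (k * n),
      (∀ t, (o.symm (L t)).1 = t) ∧ (∀ t m, (o.symm m).1 = t → m ≤ L t) := by
    refine ⟨fun t => (Finset.univ.filter fun m : Fin (k * n) => (o.symm m).1 = t).max' (hvis t),
      ?_, ?_⟩
    · intro t
      have := Finset.max'_mem _ (hvis t)
      exact (Finset.mem_filter.mp this).2
    · intro t m hm
      exact Finset.le_max' _ m (Finset.mem_filter.mpr ⟨Finset.mem_univ m, hm⟩)
  have hrank : ∀ t, (Finset.univ.filter fun m' => m' < L t ∧ (o.symm m').1 = t).card = n - 1 := by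
    intro t
    have hset : (Finset.univ.filter fun m' => m' < L t ∧ (o.symm m').1 = t)
        = (Finset.univ.filter fun m : Fin (k * n) => (o.symm m).1 = t).erase (L t) := by
      ext m'
      simp only [Finset.mem_filter, Finset.mem_univ, true_and, Finset.mem_erase]
      constructor
      · rintro ⟨h1, h2⟩; exact ⟨ne_of_lt h1, h2⟩
      · rintro ⟨h1, h2⟩; exact ⟨lt_of_le_of_ne (hLmax t m' h2) h1, h2⟩
    rw [hset, Finset.card_erase_of_mem, hfib]
    exact Finset.mem_filter.mpr ⟨Finset.mem_univ _, hLmem t⟩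
  have hcol : ∀ t, (o.symm (L t)).2 = rowPerm o t ⟨n - 1, Nat.sub_lt hn Nat.one_pos⟩ := by
    intro t
    have h := symm_snd_eq_rowPerm o (L t) ⟨n - 1, Nat.sub_lt hn Nat.one_pos⟩ ?_
    · rw [hLmem t] at h
      exact h.symm
    · simp only [hLmem t]
      exact hrank t
  -- the last-exit function
  have hstep : ∀ t : Fin k, t ≠ ⟨k - 1, hrootlt⟩ →
      L t < L (alpha t (R (rowPerm o t ⟨n - 1, Nat.sub_lt hn Nat.one_pos⟩))) := by
    intro t ht
    have hne : L t ≠ ⟨k * n - 1, hlast⟩ := by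
      intro hc
      apply ht
      rw [← hLmem t, hc]
      exact hv1
    have hlt : (L t).val + 1 < k * n := by
      have h1 := (L t).isLt
      have h2 : (L t).val ≠ k * n - 1 := fun hc => hne (Fin.ext hc)
      omega
    have h2 := hv2 (L t)
    rw [cyclicSucc_of_lt hlt, hLmem t, hcol t] at h2
    have h3 := hLmax _ ⟨(L t).val + 1, hlt⟩ h2
    exact lt_of_lt_of_le (by exact Fin.mk_lt_mk.mpr (Nat.lt_succ_self _) |>.trans_le (le_of_eq (Fin.ext rfl : (⟨(L t).val + 1, hlt⟩ : Fin (k*n)) = ⟨(L t).val + 1, hlt⟩))) h3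
  have hcast_ne_root : ∀ t' : Fin (k - 1),
      (Fin.castLE (Nat.sub_le k 1) t' : Fin k) ≠ ⟨k - 1, hrootlt⟩ := by
    intro t' hc
    have := t'.isLt
    have hval := congrArg Fin.val hc
    simp only [Fin.castLE] at hval
    omega
  refine ⟨?_, ?_, ?_⟩
  · -- loopless
    intro t' heq
    have := hstep _ (hcast_ne_root t')
    rw [← heq] at this
    exact lt_irrefl _ this
  · -- injective
    intro a b heq
    unfold treeEdges at heq
    rw [Sym2.eq_iff] at heq
    rcases heq with ⟨h1, _⟩ | ⟨h1, h2⟩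
    · exact Fin.castLE_injective _ h1
    · exfalso
      have ha := hstep _ (hcast_ne_root a)
      have hb := hstep _ (hcast_ne_root b)
      simp only at h1 h2
      rw [h2] at ha
      rw [← h1] at hb
      exact lt_irrefl _ (ha.trans hb)
  · -- connected
    set G := SimpleGraph.fromEdgeSet (Set.range (treeEdges
      (fun t => rowPerm o (Fin.castLE (Nat.sub_le k 1) t) ⟨n - 1, Nat.sub_lt hn Nat.one_pos⟩) R))
      with hG
    have hreach : ∀ c : ℕ, ∀ u : Fin k, k * n - 1 - (L u).val ≤ c →
        G.Reachable u ⟨k - 1, hrootlt⟩ := by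
      intro c
      induction c with
      | zero =>
        intro u hc
        have h1 : (L u).val = k * n - 1 := by
          have := (L u).isLt
          omega
        have h2 : L u = ⟨k * n - 1, hlast⟩ := Fin.ext h1
        have : u = (⟨k - 1, hrootlt⟩ : Fin k) := by
          rw [← hLmem u, h2]
          exact hv1
        rw [this]
      | succ c ih =>
        intro u hc
        rcases eq_or_ne u ⟨k - 1, hrootlt⟩ with rfl | hne
        · rfl
        · have hlt := hstep u hne
          have huk : u.val < k - 1 := by
            have h1 := u.isLt
            have h2 : u.val ≠ k - 1 := fun hcc => hne (Fin.ext hcc)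
            omega
          have hcastu : (Fin.castLE (Nat.sub_le k 1) (⟨u.val, huk⟩ : Fin (k - 1))) = u :=
            Fin.ext rfl
          have hadj : G.Adj u (alpha u (R (rowPerm o u ⟨n - 1, Nat.sub_lt hn Nat.one_pos⟩))) := by
            rw [hG, SimpleGraph.fromEdgeSet_adj]
            constructor
            · refine ⟨⟨u.val, huk⟩, ?_⟩
              unfold treeEdges
              rw [hcastu]
              rfl
            · intro hcc
              rw [← hcc] at hlt
              exact lt_irrefl _ hlt
          refine hadj.reachable.trans (ih _ ?_)
          have h1 := (L (alpha u (R (rowPerm o u ⟨n - 1, Nat.sub_lt hn Nat.one_pos⟩)))).isLt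
          have h2 : (L u).val < (L (alpha u (R (rowPerm o u ⟨n - 1, Nat.sub_lt hn Nat.one_pos⟩)))).val := hlt
          omega
    rw [SimpleGraph.connected_iff]
    refine ⟨fun u v => (hreach (k * n) u (by omega)).trans (hreach (k * n) v (by omega)).symm,
      ⟨⟨k - 1, hrootlt⟩⟩⟩

lemma cyclicSucc_last {N : ℕ} (hN : 0 < N) (h : N - 1 < N) :
    cyclicSucc (⟨N - 1, h⟩ : Fin N) = ⟨0, hN⟩ := by
  apply Fin.ext
  show (N - 1 + 1) % N = 0
  rw [Nat.sub_add_cancel hN, Nat.mod_self]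

theorem prebid_injective {k n : ℕ} [NeZero k] (hn : 0 < n)
    (o₁ o₂ : Fin k × Fin n ≃ Fin (k * n)) (R : Fin n → Finset (Fin k))
    (h₁ : ValidPrebidding hn (o₁, R)) (h₂ : ValidPrebidding hn (o₂, R))
    (hω : ∀ t, rowPerm o₁ t = rowPerm o₂ t) : o₁ = o₂ := by
  classical
  obtain ⟨h₁a, h₁b⟩ := h₁
  obtain ⟨h₂a, h₂b⟩ := h₂
  have hk : 0 < k := Nat.pos_of_ne_zero (NeZero.ne k)
  have hkn : 0 < k * n := Nat.mul_pos hk hn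
  have hlast : k * n - 1 < k * n := Nat.sub_lt hkn Nat.one_pos
  have hrootlt : k - 1 < k := Nat.sub_lt hk Nat.one_pos
  -- rank bound: the number of same-row predecessors is < n
  have hranklt : ∀ (o : Fin k × Fin n ≃ Fin (k * n)) (m : Fin (k * n)),
      (Finset.univ.filter fun m' => m' < m ∧ (o.symm m').1 = (o.symm m).1).card < n := by
    intro o m
    have hsub : (Finset.univ.filter fun m' => m' < m ∧ (o.symm m').1 = (o.symm m).1)
        ⊆ (Finset.univ.filter fun m' => (o.symm m').1 = (o.symm m).1).erase m := by
      intro x hx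
      rcases Finset.mem_filter.mp hx with ⟨_, hx1, hx2⟩
      exact Finset.mem_erase.mpr ⟨ne_of_lt hx1, Finset.mem_filter.mpr ⟨Finset.mem_univ _, hx2⟩⟩
    have := Finset.card_le_card hsub
    have hmem : m ∈ Finset.univ.filter fun m' => (o.symm m').1 = (o.symm m).1 :=
      Finset.mem_filter.mpr ⟨Finset.mem_univ _, rfl⟩
    rw [Finset.card_erase_of_mem hmem, card_row_fiber] at this
    omega
  -- rank of the greatest element in its row is n-1
  have hranklast : ∀ (o : Fin k × Fin n ≃ Fin (k * n)),
      (Finset.univ.filter fun m' => m' < (⟨k * n - 1, hlast⟩ : Fin (k * n)) ∧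
        (o.symm m').1 = (o.symm ⟨k * n - 1, hlast⟩).1).card = n - 1 := by
    intro o
    have hset : (Finset.univ.filter fun m' => m' < (⟨k * n - 1, hlast⟩ : Fin (k * n)) ∧
          (o.symm m').1 = (o.symm ⟨k * n - 1, hlast⟩).1)
        = (Finset.univ.filter fun m' =>
            (o.symm m').1 = (o.symm ⟨k * n - 1, hlast⟩).1).erase ⟨k * n - 1, hlast⟩ := by
      ext m'
      simp only [Finset.mem_filter, Finset.mem_univ, true_and, Finset.mem_erase]
      constructor
      · rintro ⟨hx1, hx2⟩; exact ⟨ne_of_lt hx1, hx2⟩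
      · rintro ⟨hx1, hx2⟩
        refine ⟨?_, hx2⟩
        rcases Fin.lt_or_lt_of_ne hx1 with h | h
        · exact h
        · exfalso
          have := m'.isLt
          have hv := (Fin.lt_iff_val_lt_val.mp h)
          simp only at hv
          omega
    have hmem : (⟨k * n - 1, hlast⟩ : Fin (k * n)) ∈ Finset.univ.filter fun m' =>
        (o.symm m').1 = (o.symm ⟨k * n - 1, hlast⟩).1 :=
      Finset.mem_filter.mpr ⟨Finset.mem_univ _, rfl⟩
    rw [hset, Finset.card_erase_of_mem hmem, card_row_fiber]
  -- main strong induction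
  have main : ∀ v : ℕ, ∀ hv : v < k * n, o₁.symm ⟨v, hv⟩ = o₂.symm ⟨v, hv⟩ := by
    intro v
    induction v using Nat.strong_induction_on with
    | _ v IH =>
      intro hv
      -- first components agree
      have hrow : (o₁.symm ⟨v, hv⟩).1 = (o₂.symm ⟨v, hv⟩).1 := by
        rcases Nat.eq_zero_or_pos v with rfl | hvpos
        · -- wrap-around
          have e₁ := h₁b ⟨k * n - 1, hlast⟩
          have e₂ := h₂b ⟨k * n - 1, hlast⟩
          rw [cyclicSucc_last hkn hlast] at e₁ e₂
          have hc₁ : (o₁.symm ⟨k * n - 1, hlast⟩).2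
              = rowPerm o₁ ((o₁.symm ⟨k * n - 1, hlast⟩).1) ⟨n - 1, Nat.sub_lt hn Nat.one_pos⟩ :=
            (symm_snd_eq_rowPerm o₁ _ _ (hranklast o₁)).symm
          have hc₂ : (o₂.symm ⟨k * n - 1, hlast⟩).2
              = rowPerm o₂ ((o₂.symm ⟨k * n - 1, hlast⟩).1) ⟨n - 1, Nat.sub_lt hn Nat.one_pos⟩ :=
            (symm_snd_eq_rowPerm o₂ _ _ (hranklast o₂)).symm
          rw [hc₁, h₁a] at e₁
          rw [hc₂, h₂a] at e₂
          exact e₁.trans (by rw [hω]; exact e₂.symm)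
        · -- successor
          obtain ⟨w, rfl⟩ : ∃ w, v = w + 1 := ⟨v - 1, by omega⟩
          have hw : w < k * n := by omega
          have e₁ := h₁b ⟨w, hw⟩
          have e₂ := h₂b ⟨w, hw⟩
          have hsucc : cyclicSucc (⟨w, hw⟩ : Fin (k * n)) = ⟨w + 1, hv⟩ :=
            cyclicSucc_of_lt hv
          rw [hsucc] at e₁ e₂
          have hIH := IH w (by omega) hw
          rw [e₁, e₂, hIH]
      -- second components agree
      have hsnd : (o₁.symm ⟨v, hv⟩).2 = (o₂.symm ⟨v, hv⟩).2 := by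
        set j₁ := (Finset.univ.filter fun m' => m' < (⟨v, hv⟩ : Fin (k * n)) ∧
          (o₁.symm m').1 = (o₁.symm ⟨v, hv⟩).1).card with hj₁
        have hjlt := hranklt o₁ ⟨v, hv⟩
        have hfilter_eq : (Finset.univ.filter fun m' => m' < (⟨v, hv⟩ : Fin (k * n)) ∧
              (o₁.symm m').1 = (o₁.symm ⟨v, hv⟩).1)
            = (Finset.univ.filter fun m' => m' < (⟨v, hv⟩ : Fin (k * n)) ∧
              (o₂.symm m').1 = (o₂.symm ⟨v, hv⟩).1) := by
          apply Finset.filter_congr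
          intro m' _
          constructor
          · rintro ⟨hm1, hm2⟩
            refine ⟨hm1, ?_⟩
            have hIH := IH m'.val (Fin.lt_iff_val_lt_val.mp hm1) m'.isLt
            rw [show (⟨m'.val, m'.isLt⟩ : Fin (k * n)) = m' from Fin.ext rfl] at hIH
            rw [← hIH, hm2, hrow]
          · rintro ⟨hm1, hm2⟩
            refine ⟨hm1, ?_⟩
            have hIH := IH m'.val (Fin.lt_iff_val_lt_val.mp hm1) m'.isLt
            rw [show (⟨m'.val, m'.isLt⟩ : Fin (k * n)) = m' from Fin.ext rfl] at hIH
            rw [hIH, hm2, hrow]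
        have hc₁ := symm_snd_eq_rowPerm o₁ ⟨v, hv⟩ ⟨j₁, hjlt⟩ rfl
        have hc₂ := symm_snd_eq_rowPerm o₂ ⟨v, hv⟩ ⟨j₁, hjlt⟩ (by rw [← hfilter_eq])
        rw [← hc₁, ← hc₂, hrow, hω]
      exact Prod.ext hrow hsnd
  have hsymm : o₁.symm = o₂.symm := by
    apply Equiv.ext
    intro m
    have := main m.val m.isLt
    rwa [show (⟨m.val, m.isLt⟩ : Fin (k * n)) = m from Fin.ext rfl] at this
  have := congrArg Equiv.symm hsymm
  rwa [Equiv.symm_symm, Equiv.symm_symm] at this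

lemma exists_depth {k : ℕ} (f : Fin k → Fin k) (root : Fin k) (G : SimpleGraph (Fin k))
    (hconn : G.Connected)
    (hadj : ∀ u v, G.Adj u v → (v = f u ∧ u ≠ root) ∨ (u = f v ∧ v ≠ root)) :
    ∃ D : Fin k → ℕ, D root = 0 ∧ ∀ t, t ≠ root → D t = D (f t) + 1 := by
  classical
  have step : ∀ u v, G.Adj u v → (∃ j, f^[j] v = root) → ∃ j, f^[j] u = root := by
    intro u v ha hr
    rcases hadj u v ha with ⟨hv, _⟩ | ⟨hu, hvr⟩
    · obtain ⟨j, hj⟩ := hr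
      refine ⟨j + 1, ?_⟩
      rw [Function.iterate_succ_apply, ← hv]
      exact hj
    · obtain ⟨j, hj⟩ := hr
      cases j with
      | zero => exact absurd hj hvr
      | succ j' =>
        refine ⟨j', ?_⟩
        rw [Function.iterate_succ_apply, ← hu] at hj
        exact hj
  have hreach : ∀ v, ∃ j, f^[j] v = root := by
    have key : ∀ (a b : Fin k) (w : G.Walk a b), b = root → ∃ j, f^[j] a = root := by
      intro a b w
      induction w with
      | nil => rintro rfl; exact ⟨0, rfl⟩
      | cons ha p ih => intro hb; exact step _ _ ha (ih hb)
    intro v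
    obtain ⟨w⟩ := hconn.preconnected v root
    exact key v root w rfl
  refine ⟨fun t => Nat.find (hreach t), ?_, ?_⟩
  · rw [Nat.find_eq_zero]; rfl
  · intro t ht
    have hspec := Nat.find_spec (hreach t)
    have hpos : Nat.find (hreach t) ≠ 0 := by
      intro hc
      rw [Nat.find_eq_zero] at hc
      exact ht hc
    obtain ⟨d, hd⟩ : ∃ d, Nat.find (hreach t) = d + 1 := ⟨Nat.find (hreach t) - 1, by omega⟩
    have h1 : f^[d] (f t) = root := by
      rw [hd, Function.iterate_succ_apply] at hspec
      exact hspec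
    have h2 : Nat.find (hreach (f t)) ≤ d := Nat.find_min' _ h1
    have h3 : f^[Nat.find (hreach (f t)) + 1] t = root := by
      rw [Function.iterate_succ_apply]
      exact Nat.find_spec (hreach (f t))
    have h4 : Nat.find (hreach t) ≤ Nat.find (hreach (f t)) + 1 := Nat.find_min' _ h3
    show Nat.find (hreach t) = Nat.find (hreach (f t)) + 1
    omega

theorem prebid_surjective {k n : ℕ} [NeZero k] (hn : 0 < n) (p : Fin k → ℕ)
    (B : (Fin k → Equiv.Perm (Fin n)) × (Fin n → Finset (Fin k)))
    (hB : ValidBidding hn p B) :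
    ∃ ord : Fin k × Fin n ≃ Fin (k * n),
      ValidPrebidding hn (ord, B.2) ∧ sigmaMap (ord, B.2) = B := by
  classical
  obtain ⟨ω, R⟩ := B
  obtain ⟨hInM, hTree⟩ := hB
  obtain ⟨hloop, hinjE, hconn⟩ := hTree
  have hk : 0 < k := Nat.pos_of_ne_zero (NeZero.ne k)
  have hkn : 0 < k * n := Nat.mul_pos hk hn
  have hrootlt : k - 1 < k := Nat.sub_lt hk Nat.one_pos
  have hadj : ∀ u v, (SimpleGraph.fromEdgeSet (Set.range (treeEdges
      (fun t => ω (Fin.castLE (Nat.sub_le k 1) t) ⟨n - 1, Nat.sub_lt hn Nat.one_pos⟩) R))).Adj u v →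
      (v = fe R ω hn u ∧ u ≠ ⟨k - 1, hrootlt⟩) ∨ (u = fe R ω hn v ∧ v ≠ ⟨k - 1, hrootlt⟩) := by
    intro u v ha
    rw [SimpleGraph.fromEdgeSet_adj] at ha
    obtain ⟨⟨t', ht'⟩, hne⟩ := ha
    unfold treeEdges at ht'
    rw [Sym2.eq_iff] at ht'
    have hcast_ne : (Fin.castLE (Nat.sub_le k 1) t' : Fin k) ≠ ⟨k - 1, hrootlt⟩ := by
      intro hc
      have h1 := t'.isLt
      have h2 := congrArg Fin.val hc
      simp only [Fin.castLE] at h2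
      omega
    rcases ht' with ⟨hu, hv⟩ | ⟨hv, hu⟩
    · left
      refine ⟨?_, ?_⟩
      · rw [← hv, ← hu]; rfl
      · rw [← hu]; exact hcast_ne
    · right
      refine ⟨?_, ?_⟩
      · rw [← hu, ← hv]; rfl
      · rw [← hv]; exact hcast_ne
  obtain ⟨D, hroot0, hD⟩ := exists_depth (fe R ω hn) ⟨k - 1, hrootlt⟩ _ hconn hadj
  have hfib : ∀ t, (Finset.univ.filter fun e : Fin k × Fin n => alpha e.1 (R e.2) = t).card = n :=
    card_alpha_fiber R
  have goodN := walk_no_overflow R ω hn hfib D ⟨k - 1, hrootlt⟩ hroot0 hD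
  have hrowlast : wrow R ω hn (fe R ω hn ⟨k - 1, hrootlt⟩) (k * n - 1) = ⟨k - 1, hrootlt⟩ :=
    wrow_last_eq_root R ω hn hfib D ⟨k - 1, hrootlt⟩ hroot0 hD
  set st := fe R ω hn ⟨k - 1, hrootlt⟩ with hst
  have hrowN : wrow R ω hn st (k * n) = st := by
    have := wrow_kn R ω hn st hfib goodN
    rwa [wrow_zero] at this
  set ψ : Fin (k * n) → Fin k × Fin n :=
    fun m => (wrow R ω hn st m.val, wcol R ω hn st m.val) with hψ
  have hψinj : Function.Injective ψ := by
    intro a b hab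
    have hab' : (wrow R ω hn st a.val, wcol R ω hn st a.val)
        = (wrow R ω hn st b.val, wcol R ω hn st b.val) := hab
    rw [Prod.ext_iff] at hab'
    exact Fin.ext (wedge_inj R ω hn st goodN a.isLt b.isLt hab'.1 hab'.2)
  have hψbij : Function.Bijective ψ := by
    rw [Fintype.bijective_iff_injective_and_card]
    exact ⟨hψinj, by simp⟩
  refine ⟨(Equiv.ofBijective ψ hψbij).symm, ⟨?_, ?_⟩, ?_⟩
  · exact hrowlast
  · intro m
    show (ψ (cyclicSucc m)).1 = alpha (ψ m).1 (R (ψ m).2)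
    rcases Nat.lt_or_ge (m.val + 1) (k * n) with hlt | hge
    · rw [cyclicSucc_of_lt hlt]
      exact wrow_succ R ω hn st m.val
    · have hm : m = ⟨k * n - 1, Nat.sub_lt hkn Nat.one_pos⟩ := by
        apply Fin.ext
        have := m.isLt
        show m.val = k * n - 1
        omega
      rw [hm, cyclicSucc_last hkn]
      show wrow R ω hn st 0 = alpha (wrow R ω hn st (k * n - 1)) (R (wcol R ω hn st (k * n - 1)))
      have h1 := wrow_succ R ω hn st (k * n - 1)
      rw [show k * n - 1 + 1 = k * n by omega, hrowN] at h1
      rw [wrow_zero]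
      exact h1
  · show (fun t => rowPerm (Equiv.ofBijective ψ hψbij).symm t, R) = (ω, R)
    have hordpsi : ∀ m, (Equiv.ofBijective ψ hψbij).symm.symm m = ψ m := fun m => rfl
    have hordinv : ∀ x, (Equiv.ofBijective ψ hψbij).symm.symm
        ((Equiv.ofBijective ψ hψbij).symm x) = x := fun x => Equiv.apply_symm_apply _ x
    refine Prod.ext ?_ rfl
    funext t
    apply Equiv.ext
    intro j
    apply rowPerm_eq_of_rank
    -- abbreviations
    set ord := (Equiv.ofBijective ψ hψbij).symm with hord
    have hψmj : ψ (ord (t, ω t j)) = (t, ω t j) := by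
      rw [← hordpsi]
      exact hordinv (t, ω t j)
    have hψmj' : (wrow R ω hn st (ord (t, ω t j)).val, wcol R ω hn st (ord (t, ω t j)).val)
        = (t, ω t j) := hψmj
    rw [Prod.ext_iff] at hψmj'
    have hrowmj : wrow R ω hn st (ord (t, ω t j)).val = t := hψmj'.1
    have hltmj : wcnt R ω hn st (ord (t, ω t j)).val t < n := by
      have := goodN (ord (t, ω t j)).val (ord (t, ω t j)).isLt
      rwa [hrowmj] at this
    have hcnt : wcnt R ω hn st (ord (t, ω t j)).val t = j.val :=
      wcol_spec R ω hn st hrowmj j hψmj'.2 hltmj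
    rw [← hcnt, wcnt_eq_card]
    have hordb : ∀ (b : ℕ) (hb : b < k * n), wrow R ω hn st b = t →
        ord (t, wcol R ω hn st b) = ⟨b, hb⟩ := by
      intro b hb hr
      have h1 : ψ ⟨b, hb⟩ = (t, wcol R ω hn st b) := by
        show (wrow R ω hn st b, wcol R ω hn st b) = _
        rw [hr]
      rw [← h1, hord]
      exact (Equiv.ofBijective ψ hψbij).symm_apply_apply ⟨b, hb⟩
    apply Finset.card_bij' (fun a _ => (ord (t, a)).val)
      (fun b hb => wcol R ω hn st b)
    · intro a ha
      rcases Finset.mem_filter.mp ha with ⟨_, halt⟩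
      have h1 : ψ (ord (t, a)) = (t, a) := by
        rw [← hordpsi]; exact hordinv (t, a)
      have h1' : (wrow R ω hn st (ord (t, a)).val, wcol R ω hn st (ord (t, a)).val)
          = (t, a) := h1
      rw [Prod.ext_iff] at h1'
      refine Finset.mem_filter.mpr ⟨Finset.mem_range.mpr halt, h1'.1⟩
    · intro b hb
      rcases Finset.mem_filter.mp hb with ⟨hb1, hb2⟩
      have hblt : b < k * n := lt_trans (Finset.mem_range.mp hb1) (ord (t, ω t j)).isLt
      refine Finset.mem_filter.mpr ⟨Finset.mem_univ _, ?_⟩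
      rw [hordb b hblt hb2]
      exact Finset.mem_range.mp hb1
    · intro a ha
      have h1 : ψ (ord (t, a)) = (t, a) := by
        rw [← hordpsi]; exact hordinv (t, a)
      have h1' : (wrow R ω hn st (ord (t, a)).val, wcol R ω hn st (ord (t, a)).val)
          = (t, a) := h1
      rw [Prod.ext_iff] at h1'
      exact h1'.2
    · intro b hb
      rcases Finset.mem_filter.mp hb with ⟨hb1, hb2⟩
      have hblt : b < k * n := lt_trans (Finset.mem_range.mp hb1) (ord (t, ω t j)).isLt
      rw [hordb b hblt hb2]

theorem sigma_bijection (k n : ℕ) [NeZero k] (hk : 2 ≤ k) (hn : 0 < n) (p : Fin k → ℕ)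
    (hp : ∀ t, 0 < p t) :
    Set.BijOn sigmaMap
      {P : (Fin k × Fin n ≃ Fin (k * n)) × (Fin n → Finset (Fin k)) |
        ValidPrebidding hn P ∧ InM p P.2}
      {B : (Fin k → Equiv.Perm (Fin n)) × (Fin n → Finset (Fin k)) |
        ValidBidding hn p B} ∧
    Nat.card {P : (Fin k × Fin n ≃ Fin (k * n)) × (Fin n → Finset (Fin k)) //
        ValidPrebidding hn P ∧ InM p P.2} =
    Nat.card {B : (Fin k → Equiv.Perm (Fin n)) × (Fin n → Finset (Fin k)) //
        ValidBidding hn p B} := by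
  classical
  have hbij : Set.BijOn sigmaMap
      {P : (Fin k × Fin n ≃ Fin (k * n)) × (Fin n → Finset (Fin k)) |
        ValidPrebidding hn P ∧ InM p P.2}
      {B : (Fin k → Equiv.Perm (Fin n)) × (Fin n → Finset (Fin k)) |
        ValidBidding hn p B} := by
    refine ⟨?_, ?_, ?_⟩
    · rintro ⟨o, R⟩ ⟨hvP, hinM⟩
      exact ⟨hinM, prebid_tree hn o R hvP⟩
    · rintro ⟨o₁, R₁⟩ h₁ ⟨o₂, R₂⟩ h₂ heq
      have hR : R₁ = R₂ := congrArg Prod.snd heq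
      subst hR
      have hω : ∀ t, rowPerm o₁ t = rowPerm o₂ t := by
        intro t
        have h := congrArg Prod.fst heq
        exact congrFun h t
      have ho := prebid_injective hn o₁ o₂ R₁ h₁.1 h₂.1 hω
      rw [ho]
    · rintro B hB
      obtain ⟨ord, hvP, hmap⟩ := prebid_surjective hn p B hB
      exact ⟨(ord, B.2), ⟨hvP, hB.1⟩, hmap⟩
  exact ⟨hbij, Nat.card_congr (Set.BijOn.equiv _ hbij)⟩
end

section
/- For all integers n ≥ 1 and p ≥ 1, the number of pairs (π,φ) where π is a permutation of [n] and φ is a surjective map from [n] to [p] such that φ(a) = φ(b) whenever a and b lie in the same cycle of π, equals n! · binom(n−1, p−1). -/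
open Finset

section CountAux
open Finset Function Equiv Nat

noncomputable def Ssum (p : ℕ) (α : Type) [Fintype α] [DecidableEq α] : ℕ :=
  ∑ f : α → Fin p, if Surjective f then ∏ i, (Fintype.card {a // f a = i})! else 0

lemma ssum_zero {p : ℕ} (hp : 0 < p) (α : Type) [Fintype α] [DecidableEq α]
    (h : Fintype.card α = 0) : Ssum p α = 0 := by
  haveI := Fintype.card_eq_zero_iff.mp h
  refine Finset.sum_eq_zero fun f _ => if_neg fun hs => ?_
  obtain ⟨a, -⟩ := hs ⟨0, hp⟩
  exact IsEmpty.false a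

lemma ssum_one (α : Type) [Fintype α] [DecidableEq α] (h : 0 < Fintype.card α) :
    Ssum 1 α = (Fintype.card α)! := by
  have : Nonempty α := Fintype.card_pos_iff.mp h
  rw [Ssum, Fintype.sum_unique]
  have hsurj : Surjective (default : α → Fin 1) :=
    fun b => ⟨Classical.arbitrary α, Subsingleton.elim _ _⟩
  rw [if_pos hsurj, Fin.prod_univ_one]
  congr 1
  exact Fintype.card_congr (Equiv.subtypeUnivEquiv fun a => Subsingleton.elim _ _)
lemma invariant_iff_s16 {n p : ℕ} (π : Equiv.Perm (Fin n)) (cl : Fin n → Fin p) :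
    (∀ a b, π.SameCycle a b → cl a = cl b) ↔ cl ∘ π = cl := by
  constructor
  · intro h; funext a; exact (h a (π a) ⟨1, by simp⟩).symm
  · intro h
    have hπ : ∀ x, cl (π x) = cl x := fun x => congrFun h x
    have H : ∀ (k : ℤ) (a), cl ((π ^ k) a) = cl a := by
      intro k
      induction k using Int.induction_on with
      | zero => intro a; simp
      | succ k ih => intro a; rw [zpow_add_one, Equiv.Perm.mul_apply, ih, hπ]
      | pred k ih => intro a
                     rw [zpow_sub_one, Equiv.Perm.mul_apply, ih]
                     conv_rhs => rw [← (Equiv.Perm.eq_inv_iff_eq (f := π) (x := π⁻¹ a) (y := a)).mp rfl]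
                     rw [hπ]
    rintro a b ⟨k, rfl⟩
    exact (H k a).symm

lemma key_split {α : Type} [Fintype α] [DecidableEq α] {p : ℕ} (s : Finset α) :
    (∑ f ∈ univ.filter (fun f : α → Fin (p+1) =>
        univ.filter (fun a => f a = Fin.last p) = s),
       (if Surjective f then ∏ i, (Fintype.card {a // f a = i})! else 0))
    = if s.Nonempty then s.card ! * Ssum p {x // x ∈ sᶜ} else 0 := by
  have hrhs : (if s.Nonempty then s.card ! * Ssum p {x // x ∈ sᶜ} else 0)
      = ∑ g : {x // x ∈ sᶜ} → Fin p,
          (if s.Nonempty ∧ Surjective g then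
            s.card ! * ∏ i, (Fintype.card {x // g x = i})! else 0) := by
    by_cases hs : s.Nonempty
    · rw [if_pos hs, Ssum, Finset.mul_sum]
      exact Finset.sum_congr rfl fun g _ => by
        by_cases h2 : Surjective g <;> simp [h2, hs]
    · simp [hs]
  rw [hrhs]
  refine Finset.sum_bij'
    (i := fun f hf => fun x : {x // x ∈ sᶜ} => (f x.1).castPred ?_)
    (j := fun g _ => fun a : α =>
      if h : a ∈ s then Fin.last p else (g ⟨a, Finset.mem_compl.mpr h⟩).castSucc)
    ?_ ?_ ?_ ?_ ?_
  · -- castPred valid : f x.1 ≠ last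
    have hs' := (Finset.mem_filter.mp hf).2
    intro hlast
    have : x.1 ∈ univ.filter (fun a => f a = Fin.last p) := by
      simp [hlast]
    rw [hs'] at this
    exact Finset.mem_compl.mp x.2 this
  · intro f hf; exact Finset.mem_univ _
  · -- j maps into the filter set
    intro g _
    simp only [Finset.mem_filter, Finset.mem_univ, true_and]
    ext a
    simp only [Finset.mem_filter, Finset.mem_univ, true_and]
    by_cases h : a ∈ s
    · simp [h]
    · simp [h, (Fin.castSucc_lt_last _).ne]
  · -- left inverse : j (i f) = f
    intro f hf
    funext a
    dsimp only
    by_cases h : a ∈ s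
    · rw [dif_pos h]
      have hs' := (Finset.mem_filter.mp hf).2
      rw [← hs'] at h
      exact ((Finset.mem_filter.mp h).2).symm
    · rw [dif_neg h, Fin.castSucc_castPred]
  · -- right inverse : i (j g) = g
    intro g _
    funext x
    dsimp only
    apply Fin.castSucc_injective
    rw [Fin.castSucc_castPred]
    have hx : x.1 ∉ s := Finset.mem_compl.mp x.2
    simp only [dif_neg hx]
  · -- values agree
    intro f hf
    have hs' := (Finset.mem_filter.mp hf).2
    have hmem : ∀ a, a ∈ s ↔ f a = Fin.last p := by
      intro a; rw [← hs']; simp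
    set g : {x // x ∈ sᶜ} → Fin p := fun x => (f x.1).castPred
      (fun hlast => Finset.mem_compl.mp x.2 ((hmem x.1).mpr hlast)) with hg
    have hcast : ∀ x : {x // x ∈ sᶜ}, Fin.castSucc (g x) = f x.1 := by
      intro x; rw [hg]; exact Fin.castSucc_castPred _ _
    have hsurj : Surjective f ↔ (s.Nonempty ∧ Surjective g) := by
      constructor
      · intro hf'
        constructor
        · obtain ⟨a, ha⟩ := hf' (Fin.last p)
          exact ⟨a, (hmem a).mpr ha⟩
        · intro i
          obtain ⟨a, ha⟩ := hf' i.castSucc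
          have hans : a ∉ s := fun hin => by
            rw [(hmem a).mp hin] at ha
            exact (Fin.castSucc_lt_last i).ne' ha
          refine ⟨⟨a, Finset.mem_compl.mpr hans⟩, ?_⟩
          apply Fin.castSucc_injective
          rw [hcast]; exact ha
      · rintro ⟨hne, hgs⟩ b
        by_cases hb : b = Fin.last p
        · obtain ⟨a, ha⟩ := hne
          exact ⟨a, by rw [(hmem a).mp ha, hb]⟩
        · obtain ⟨x, hx⟩ := hgs (b.castPred hb)
          refine ⟨x.1, ?_⟩
          rw [← hcast x, hx, Fin.castSucc_castPred]
    have hlastcard : Fintype.card {a // f a = Fin.last p} = s.card := by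
      rw [Fintype.card_subtype, ← hs']
    have hfib : ∀ i : Fin p,
        Fintype.card {a // f a = Fin.castSucc i} = Fintype.card {x : {y // y ∈ sᶜ} // g x = i} := by
      intro i
      apply Fintype.card_congr
      refine ⟨fun a => ⟨⟨a.1, Finset.mem_compl.mpr fun hin => ?_⟩, ?_⟩,
              fun x => ⟨x.1.1, ?_⟩, fun a => Subtype.ext rfl, fun x => Subtype.ext (Subtype.ext rfl)⟩
      · have := (hmem a.1).mp hin
        rw [a.2] at this
        exact (Fin.castSucc_lt_last i).ne this
      · apply Fin.castSucc_injective
        rw [hcast]; exact a.2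
      · rw [← hcast x.1, x.2]
    have hprod : ∏ i : Fin (p+1), (Fintype.card {a // f a = i})!
        = (∏ i : Fin p, (Fintype.card {x : {y // y ∈ sᶜ} // g x = i})!) * s.card ! := by
      rw [Fin.prod_univ_castSucc]
      congr 1
      · exact Finset.prod_congr rfl fun i _ => by rw [hfib i]
      · rw [hlastcard]
    by_cases h1 : Surjective f
    · rw [if_pos h1, if_pos (hsurj.mp h1), hprod, mul_comm]
    · rw [if_neg h1, if_neg (fun hc => h1 (hsurj.mpr hc))]

lemma sum_range_choose_eq (N k : ℕ) (hk : 0 < k) :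
    ∑ i ∈ range N, i.choose (k-1) = N.choose k := by
  cases N with
  | zero => simp [Nat.choose_eq_zero_of_lt hk]
  | succ M =>
    have h1 : ∑ i ∈ range (M+1), i.choose (k-1) = ∑ i ∈ Icc (k-1) M, i.choose (k-1) := by
      rw [range_eq_Ico, ← Finset.Ico_add_one_right_eq_Icc]
      refine (Finset.sum_subset ?_ ?_).symm
      · intro x hx; simp only [Finset.mem_Ico] at *; omega
      · intro x hx hx2
        simp only [Finset.mem_Ico] at hx hx2
        exact Nat.choose_eq_zero_of_lt (by omega)
    rw [h1, Nat.sum_Icc_choose]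
    congr 1
    omega

lemma ssum_eq : ∀ (p : ℕ), 0 < p → ∀ (α : Type) [Fintype α] [DecidableEq α],
    0 < Fintype.card α →
    Ssum p α = (Fintype.card α)! * (Fintype.card α - 1).choose (p - 1) := by
  intro p
  induction p with
  | zero => intro h; exact absurd h (lt_irrefl 0)
  | succ p ih =>
    intro _ α _ _ hcard
    rcases Nat.eq_zero_or_pos p with hp0 | hp
    · subst hp0
      simpa using ssum_one α hcard
    · set n := Fintype.card α with hn
      have split : Ssum (p+1) α
          = ∑ s : Finset α, (if s.Nonempty then s.card ! * Ssum p {x // x ∈ sᶜ} else 0) := by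
        rw [Ssum, ← Finset.sum_fiberwise_of_maps_to
          (g := fun f : α → Fin (p+1) => univ.filter (fun a => f a = Fin.last p))
          (t := (univ : Finset (Finset α))) (fun f _ => Finset.mem_univ _) _]
        exact Finset.sum_congr rfl fun s _ => key_split s
      rw [split]
      have term : ∀ s : Finset α, (if s.Nonempty then s.card ! * Ssum p {x // x ∈ sᶜ} else 0)
          = if 0 < s.card ∧ s.card < n then
              s.card ! * ((n - s.card)! * (n - s.card - 1).choose (p-1)) else 0 := by
        intro s
        have hsle : s.card ≤ n := by rw [hn, ← Finset.card_univ]; exact Finset.card_le_card (Finset.subset_univ s)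
        by_cases h1 : s.Nonempty
        · have hsc : 0 < s.card := Finset.card_pos.mpr h1
          by_cases h2 : s.card < n
          · have hcc : Fintype.card {x // x ∈ sᶜ} = n - s.card := by
              rw [Fintype.card_coe, Finset.card_compl]
            rw [if_pos h1, if_pos ⟨hsc, h2⟩, ih hp _ (by rw [hcc]; omega), hcc]
          · have hc0 : Fintype.card {x // x ∈ sᶜ} = 0 := by
              rw [Fintype.card_coe, Finset.card_compl]; omega
            rw [if_pos h1, ssum_zero hp _ hc0, if_neg (fun hc => h2 hc.2), mul_zero]
        · rw [if_neg h1, if_neg (fun hc => h1 (Finset.card_pos.mp hc.1))]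
      rw [Finset.sum_congr rfl fun s _ => term s]
      have hps := Finset.sum_powerset_apply_card
        (f := fun j => if 0 < j ∧ j < n then j ! * ((n - j)! * (n - j - 1).choose (p-1)) else 0)
        (x := (univ : Finset α))
      rw [Finset.powerset_univ, Finset.card_univ, ← hn] at hps
      rw [hps]
      have hstep : ∑ j ∈ range (n+1), n.choose j •
            (if 0 < j ∧ j < n then j ! * ((n - j)! * (n - j - 1).choose (p-1)) else 0)
          = ∑ j ∈ range (n+1), (if 0 < j ∧ j < n then n ! * (n - 1 - j).choose (p-1) else 0) := by
        refine Finset.sum_congr rfl fun j _ => ?_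
        by_cases h : 0 < j ∧ j < n
        · rw [if_pos h, if_pos h, smul_eq_mul]
          have hjn : j ≤ n := le_of_lt h.2
          calc n.choose j * (j ! * ((n - j)! * (n - j - 1).choose (p-1)))
              = (n.choose j * j ! * (n - j)!) * (n - j - 1).choose (p-1) := by ring
            _ = n ! * (n - 1 - j).choose (p-1) := by
                rw [Nat.choose_mul_factorial_mul_factorial hjn]; congr 2; omega
        · rw [if_neg h, if_neg h, smul_zero]
      rw [hstep]
      have hio : ∑ j ∈ range (n+1), (if 0 < j ∧ j < n then n ! * (n - 1 - j).choose (p-1) else 0)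
          = ∑ j ∈ Ico 1 n, n ! * (n - 1 - j).choose (p-1) := by
        rw [← Finset.sum_filter]
        refine Finset.sum_congr ?_ (fun _ _ => rfl)
        ext j
        simp only [Finset.mem_filter, Finset.mem_range, Finset.mem_Ico]
        omega
      rw [hio, ← Finset.mul_sum]
      have hsum : ∑ j ∈ Ico 1 n, (n - 1 - j).choose (p-1) = (n-1).choose p := by
        rw [Finset.sum_Ico_eq_sum_range]
        have heq : ∀ i, n - 1 - (1 + i) = (n-1) - 1 - i := fun i => by omega
        rw [Finset.sum_congr rfl fun i _ => by rw [heq i]]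
        rw [Finset.sum_range_reflect (fun j => j.choose (p-1)) (n-1)]
        exact sum_range_choose_eq (n-1) p hp
      rw [hsum]
      simp

theorem count_colored_perms (n p : ℕ) (hn : 0 < n) (hp : 0 < p) :
    Nat.card {x : Equiv.Perm (Fin n) × (Fin n → Fin p) //
        Function.Surjective x.2 ∧ ∀ a b, x.1.SameCycle a b → x.2 a = x.2 b} =
    n.factorial * (n - 1).choose (p - 1) := by
  classical
  have e1 : {x : Equiv.Perm (Fin n) × (Fin n → Fin p) //
        Function.Surjective x.2 ∧ ∀ a b, x.1.SameCycle a b → x.2 a = x.2 b}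
      ≃ Σ f : Fin n → Fin p, {π : Equiv.Perm (Fin n) // Surjective f ∧ f ∘ π = f} :=
    { toFun := fun x => ⟨x.1.2, x.1.1, x.2.1, (invariant_iff_s16 x.1.1 x.1.2).mp x.2.2⟩
      invFun := fun y => ⟨(y.2.1, y.1), y.2.2.1, (invariant_iff_s16 y.2.1 y.1).mpr y.2.2.2⟩
      left_inv := fun x => rfl
      right_inv := fun y => rfl }
  rw [Nat.card_congr e1, Nat.card_eq_fintype_card, Fintype.card_sigma]
  have hfin : Ssum p (Fin n) = n ! * (n - 1).choose (p - 1) := by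
    rw [ssum_eq p hp (Fin n) (by simpa using hn), Fintype.card_fin]
  rw [← hfin, Ssum]
  refine Finset.sum_congr rfl fun f _ => ?_
  by_cases h : Surjective f
  · rw [if_pos h, ← DomMulAct.stabilizer_card f]
    exact Fintype.card_congr (Equiv.subtypeEquivRight (fun π => and_iff_right h))
  · rw [if_neg h]
    rw [Fintype.card_eq_zero_iff]
    exact ⟨fun x => h x.2.1⟩

end CountAux
end
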